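/- arXiv:2405.01152 — 6 statements merged into one kernel-verified Lean document; each statement's English description precedes it below -/
import Mathlib

section
/- Let X be a two-term R[1]-rigid subcategory. The following are equivalent: (1) X is two-term maximal R[1]-rigid and every object of R admits a left X-approximation; (2) R ⊆ X[-1] * X; (3) X is two-term weak R[1]-cluster tilting. -/
open CategoryTheory CategoryTheory.Limits CategoryTheory.Pretriangulated

universe v u w

namespace RelCT

/-- Krull–Schmidt: every object decomposes as a finite biproduct of objects with local
endomorphism rings. -/
def KrullSchmidtCat (C : Type u) [Category.{v} C] [Preadditive C] : Prop :=
  ∀ X : C, ∃ (n : ℕ) (f : Fin n → C) (p : ∀ i, X ⟶ f i) (ι : ∀ i, f i ⟶ X),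
    (∀ i, ι i ≫ p i = 𝟙 (f i)) ∧ (∑ i, p i ≫ ι i) = 𝟙 X ∧
    ∀ i (φ : f i ⟶ f i), IsIso φ ∨ IsIso (𝟙 (f i) - φ)

/-- `Fac W`: objects admitting an epimorphism from an object of `W`. -/
def FacSet {Q : Type w} [Category Q] (W : Set Q) : Set Q :=
  {Y | ∃ X ∈ W, ∃ p : X ⟶ Y, Epi p}

/-- `Ext¹(X, F) = 0`, expressed as: every short exact sequence
`0 → F → E → X → 0` splits. -/
def Ext1Zero {Q : Type w} [Category Q] [Abelian Q] (X F : Q) : Prop :=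
  ∀ S : CategoryTheory.ShortComplex Q, S.ShortExact → (S.X₁ ≅ F) → (S.X₃ ≅ X) →
    ∃ r : S.X₂ ⟶ S.X₁, S.f ≫ r = 𝟙 S.X₁

variable {C : Type u} [Category.{v} C] [Preadditive C] [HasZeroObject C]
  [HasShift C ℤ] [∀ n : ℤ, (CategoryTheory.shiftFunctor C n).Additive] [Pretriangulated C]

/-- The shift `D[n]` of a collection of objects, closed under isomorphism. -/
def shiftSet (D : Set C) (n : ℤ) : Set C :=
  {X | ∃ Y ∈ D, Nonempty (X ≅ Y⟦n⟧)}

/-- `f` factors through an object of `D`. -/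
def Factors (D : Set C) {A B : C} (f : A ⟶ B) : Prop :=
  ∃ (Z : C) (g : A ⟶ Z) (h : Z ⟶ B), Z ∈ D ∧ f = g ≫ h

/-- `X * Y`: objects `M` admitting a distinguished triangle `A → M → B → A[1]`
with `A ∈ X`, `B ∈ Y`. -/
def star (X Y : Set C) : Set C :=
  {M | ∃ (A B : C) (f : A ⟶ M) (g : M ⟶ B) (h : B ⟶ A⟦(1:ℤ)⟧),
    A ∈ X ∧ B ∈ Y ∧ (Triangle.mk f g h ∈ distTriang C)}

/-- `R` is rigid: `Hom(R, R[1]) = 0`. -/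
def Rigid (R : Set C) : Prop :=
  ∀ ⦃A B : C⦄, A ∈ R → B ∈ R → ∀ f : A ⟶ B⟦(1:ℤ)⟧, f = 0

/-- `[R[1]](X, Y[1]) = 0` : every morphism from an object of `X` to a first shift of
an object of `Y` which factors through `R[1]` vanishes. -/
def RelRigid (R X Y : Set C) : Prop :=
  ∀ ⦃A B : C⦄, A ∈ X → B ∈ Y → ∀ f : A ⟶ B⟦(1:ℤ)⟧, Factors (shiftSet R 1) f → f = 0

/-- Closure of a collection of objects under finite direct sums and direct summands. -/
inductive addClosure (D : Set C) : C → Prop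
  | of {X : C} : X ∈ D → addClosure D X
  | zero {X : C} : IsZero X → addClosure D X
  | sum {X Y Z : C} : addClosure D X → addClosure D Y →
      (∃ (pX : Z ⟶ X) (pY : Z ⟶ Y) (iX : X ⟶ Z) (iY : Y ⟶ Z),
        iX ≫ pX = 𝟙 X ∧ iY ≫ pY = 𝟙 Y ∧ pX ≫ iX + pY ≫ iY = 𝟙 Z) →
      addClosure D Z
  | smd {X Y : C} : addClosure D Y → (∃ (s : X ⟶ Y) (r : Y ⟶ X), s ≫ r = 𝟙 X) →
      addClosure D X

/-- `D` is closed under finite direct sums and direct summands. -/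
def AddClosed (D : Set C) : Prop := ∀ X : C, addClosure D X → X ∈ D

/-- closed under direct sums (expressed via biproduct data). -/
def SumClosed (D : Set C) : Prop :=
  ∀ ⦃X Y Z : C⦄, X ∈ D → Y ∈ D →
    (∃ (pX : Z ⟶ X) (pY : Z ⟶ Y) (iX : X ⟶ Z) (iY : Y ⟶ Z),
      iX ≫ pX = 𝟙 X ∧ iY ≫ pY = 𝟙 Y ∧ pX ≫ iX + pY ≫ iY = 𝟙 Z) → Z ∈ D

/-- closed under direct summands. -/
def SummandClosed (D : Set C) : Prop :=
  ∀ ⦃X Y : C⦄, Y ∈ D → (∃ (s : X ⟶ Y) (r : Y ⟶ X), s ≫ r = 𝟙 X) → X ∈ D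

/-- closed under isomorphisms. -/
def IsoClosed (D : Set C) : Prop :=
  ∀ ⦃X Y : C⦄, X ∈ D → Nonempty (X ≅ Y) → Y ∈ D

/-- `f : A ⟶ X` is a left `D`-approximation of `A`. -/
def IsLeftApprox (D : Set C) {A X : C} (f : A ⟶ X) : Prop :=
  X ∈ D ∧ ∀ ⦃X' : C⦄, X' ∈ D → ∀ g : A ⟶ X', ∃ h : X ⟶ X', f ≫ h = g

/-- `f : X ⟶ A` is a right `D`-approximation of `A`. -/
def IsRightApprox (D : Set C) {X A : C} (f : X ⟶ A) : Prop :=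
  X ∈ D ∧ ∀ ⦃X' : C⦄, X' ∈ D → ∀ g : X' ⟶ A, ∃ h : X' ⟶ X, h ≫ f = g

/-- `f` is left minimal. -/
def LeftMinimal {A B : C} (f : A ⟶ B) : Prop :=
  ∀ u : B ⟶ B, f ≫ u = f → IsIso u

/-- `f` is right minimal. -/
def RightMinimal {A B : C} (f : A ⟶ B) : Prop :=
  ∀ u : A ⟶ A, u ≫ f = f → IsIso u

/-- `f` lies in the Jacobson radical of the category. -/
def InRadical {A B : C} (f : A ⟶ B) : Prop :=
  ∀ g : B ⟶ A, IsIso (𝟙 A - f ≫ g)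

/-- indecomposable object. -/
def Indec (W : C) : Prop :=
  ¬ IsZero W ∧ ∀ p : W ⟶ W, p ≫ p = p → p = 0 ∨ p = 𝟙 W

/-- two-term `R[1]`-rigid subcategory. -/
def TwoTermRigid (R X : Set C) : Prop :=
  RelRigid R X X ∧ X ⊆ star R (shiftSet R 1)

/-- two-term maximal `R[1]`-rigid subcategory. -/
def TwoTermMaximal (R X : Set C) : Prop :=
  TwoTermRigid R X ∧
  ∀ M ∈ star R (shiftSet R 1),
    RelRigid R {Z | addClosure (insert M X) Z} {Z | addClosure (insert M X) Z} → M ∈ X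

/-- two-term weak `R[1]`-cluster tilting subcategory. -/
def TwoTermWCT (R X : Set C) : Prop :=
  X ⊆ star R (shiftSet R 1) ∧ R ⊆ star (shiftSet X (-1)) X ∧
  ∀ M : C, M ∈ X ↔ (M ∈ star R (shiftSet R 1) ∧ RelRigid R {M} X ∧ RelRigid R X {M})

/-- `R(X) = { R₀ ∈ R | Hom(R₀, X) = 0 }`. -/
def RZero (R X : Set C) : Set C :=
  {A | A ∈ R ∧ ∀ B ∈ X, ∀ f : A ⟶ B, f = 0}

/-- `X` is `R[1]`-functorially finite. -/
def RFunctoriallyFinite (R X : Set C) : Prop :=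
  (∀ R₀ ∈ R, ∃ (X₀ : C) (f : R₀ ⟶ X₀), IsLeftApprox X f) ∧
  (∀ A ∈ shiftSet R 1, ∃ (X₀ : C) (f : X₀ ⟶ A), IsRightApprox X f)

/-- Data of triangles `R₀ → X^{R₀} → V^{R₀} → R₀[1]` with minimal left `X`-approximations,
defining the completion `M_X`. -/
structure MData (R X : Set C) where
  obj : ∀ R₀ : C, R₀ ∈ R → C
  cone : ∀ R₀ : C, R₀ ∈ R → C
  f : ∀ (R₀ : C) (h : R₀ ∈ R), R₀ ⟶ obj R₀ h
  g : ∀ (R₀ : C) (h : R₀ ∈ R), obj R₀ h ⟶ cone R₀ h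
  w : ∀ (R₀ : C) (h : R₀ ∈ R), cone R₀ h ⟶ R₀⟦(1:ℤ)⟧
  tri : ∀ (R₀ : C) (h : R₀ ∈ R), Triangle.mk (f R₀ h) (g R₀ h) (w R₀ h) ∈ distTriang C
  approx : ∀ (R₀ : C) (h : R₀ ∈ R), IsLeftApprox X (f R₀ h)
  minimal : ∀ (R₀ : C) (h : R₀ ∈ R), LeftMinimal (f R₀ h)

/-- `M_X = add (X ∪ {V^R | R ∈ R})`. -/
def MData.cat {R X : Set C} (d : MData R X) : Set C :=
  {Z | addClosure (X ∪ {V | ∃ (R₀ : C) (h : R₀ ∈ R), V = d.cone R₀ h}) Z}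

/-- Data of triangles `R₀ → V_{R₀} → U_{R₀} → R₀[1]` with the last map a right
`X`-approximation, defining the completion `N_X`. -/
structure NData (R X : Set C) where
  cocone : ∀ R₀ : C, R₀ ∈ R → C
  obj : ∀ R₀ : C, R₀ ∈ R → C
  a : ∀ (R₀ : C) (h : R₀ ∈ R), R₀ ⟶ cocone R₀ h
  b : ∀ (R₀ : C) (h : R₀ ∈ R), cocone R₀ h ⟶ obj R₀ h
  c : ∀ (R₀ : C) (h : R₀ ∈ R), obj R₀ h ⟶ R₀⟦(1:ℤ)⟧
  tri : ∀ (R₀ : C) (h : R₀ ∈ R), Triangle.mk (a R₀ h) (b R₀ h) (c R₀ h) ∈ distTriang C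
  approx : ∀ (R₀ : C) (h : R₀ ∈ R), IsRightApprox X (c R₀ h)

/-- `N_X = add (X ∪ {V_R | R ∈ R})`. -/
def NData.cat {R X : Set C} (d : NData R X) : Set C :=
  {Z | addClosure (X ∪ {V | ∃ (R₀ : C) (h : R₀ ∈ R), V = d.cocone R₀ h}) Z}

/-- `(M, N)` is an `X`-mutation pair. -/
def MutationPair (R X M N : Set C) : Prop :=
  M ≠ N ∧ TwoTermWCT R M ∧ TwoTermWCT R N ∧ X ⊆ M ∧ X ⊆ N ∧
  (∀ Y ∈ M, ∃ (Z X₀ : C) (z : Z ⟶ X₀) (x : X₀ ⟶ Y) (y : Y ⟶ Z⟦(1:ℤ)⟧),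
      Z ∈ N ∧ X₀ ∈ X ∧ (Triangle.mk z x y ∈ distTriang C) ∧ Factors (shiftSet R 1) y) ∧
  (∀ Z' ∈ N, ∃ (X' Y' : C) (z' : Z' ⟶ X') (x' : X' ⟶ Y') (y' : Y' ⟶ Z'⟦(1:ℤ)⟧),
      X' ∈ X ∧ Y' ∈ M ∧ (Triangle.mk z' x' y' ∈ distTriang C) ∧ Factors (shiftSet R 1) y')

/-- almost complete two-term weak `R[1]`-cluster tilting subcategory. -/
def AlmostComplete (R X : Set C) : Prop :=
  TwoTermRigid R X ∧ RFunctoriallyFinite R X ∧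
    ∃ W : C, Indec W ∧ W ∉ X ∧ TwoTermWCT R {Z | addClosure (insert W X) Z}

/-- completion of an almost complete subcategory `X`. -/
def IsCompletion (R X U : Set C) : Prop :=
  TwoTermWCT R U ∧ ∃ W : C, Indec W ∧ W ∉ X ∧ U = {Z | addClosure (insert W X) Z}


section Aux

lemma factors_precomp {D : Set C} {A A' B : C} (g : A' ⟶ A) {f : A ⟶ B}
    (h : Factors D f) : Factors D (g ≫ f) := by
  obtain ⟨Z, a, b, hZ, rfl⟩ := h
  exact ⟨Z, g ≫ a, b, hZ, by simp⟩

lemma factors_postcomp {D : Set C} {A B B' : C} (g : B ⟶ B') {f : A ⟶ B}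
    (h : Factors D f) : Factors D (f ≫ g) := by
  obtain ⟨Z, a, b, hZ, rfl⟩ := h
  exact ⟨Z, a, b ≫ g, hZ, by simp⟩

lemma addClosure_iso {D : Set C} {A B : C} (hA : addClosure D A) (e : A ≅ B) :
    addClosure D B :=
  addClosure.smd hA ⟨e.inv, e.hom, e.inv_hom_id⟩

lemma shift1_mem {R : Set C} {A : C} (hA : A ∈ R) : A⟦(1:ℤ)⟧ ∈ shiftSet R 1 :=
  ⟨A, hA, ⟨Iso.refl _⟩⟩

lemma shiftNeg_one_mem_aux {X : Set C} (haddX : AddClosed X) {A : C}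
    (hA : A ∈ shiftSet X (-1)) : A⟦(1:ℤ)⟧ ∈ X := by
  obtain ⟨Y, hY, ⟨e⟩⟩ := hA
  exact haddX _ (addClosure_iso (addClosure.of hY)
    ((shiftNegShift Y (1:ℤ)).symm ≪≫ ((shiftFunctor C (1:ℤ)).mapIso e).symm))

lemma vanish_source {R D : Set C} {B : C}
    (H : ∀ A ∈ D, ∀ f : A ⟶ B⟦(1:ℤ)⟧, Factors (shiftSet R 1) f → f = 0) :
    ∀ {A' : C}, addClosure D A' → ∀ f : A' ⟶ B⟦(1:ℤ)⟧,
      Factors (shiftSet R 1) f → f = 0 := by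
  intro A' hA'
  induction hA' with
  | of h => exact H _ h
  | zero h => intro f _; exact h.eq_of_src f 0
  | sum h1 h2 hdata ih1 ih2 =>
      obtain ⟨pX, pY, iX, iY, e1, e2, e3⟩ := hdata
      intro f hf
      have z1 : iX ≫ f = 0 := ih1 _ (factors_precomp iX hf)
      have z2 : iY ≫ f = 0 := ih2 _ (factors_precomp iY hf)
      calc f = (pX ≫ iX + pY ≫ iY) ≫ f := by rw [e3, Category.id_comp]
        _ = pX ≫ (iX ≫ f) + pY ≫ (iY ≫ f) := by
            rw [Preadditive.add_comp, Category.assoc, Category.assoc]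
        _ = 0 := by rw [z1, z2, comp_zero, comp_zero, add_zero]
  | smd h1 hdata ih1 =>
      obtain ⟨s, r, hsr⟩ := hdata
      intro f hf
      have z : r ≫ f = 0 := ih1 _ (factors_precomp r hf)
      calc f = (s ≫ r) ≫ f := by rw [hsr, Category.id_comp]
        _ = s ≫ (r ≫ f) := Category.assoc _ _ _
        _ = 0 := by rw [z, comp_zero]

lemma vanish_target {R D : Set C} {A : C}
    (H : ∀ B ∈ D, ∀ f : A ⟶ B⟦(1:ℤ)⟧, Factors (shiftSet R 1) f → f = 0) :
    ∀ {B' : C}, addClosure D B' → ∀ f : A ⟶ B'⟦(1:ℤ)⟧,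
      Factors (shiftSet R 1) f → f = 0 := by
  intro B' hB'
  induction hB' with
  | of h => exact H _ h
  | @zero Y h =>
      intro f _
      have h1 : 𝟙 (Y⟦(1:ℤ)⟧) = 0 := by
        rw [← CategoryTheory.Functor.map_id, h.eq_of_src (𝟙 Y) 0, CategoryTheory.Functor.map_zero]
      rw [← Category.comp_id f, h1, comp_zero]
  | @sum Y₁ Y₂ W h1 h2 hdata ih1 ih2 =>
      obtain ⟨pX, pY, iX, iY, e1, e2, e3⟩ := hdata
      intro f hf
      have z1 : f ≫ pX⟦(1:ℤ)⟧' = 0 := ih1 _ (factors_postcomp _ hf)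
      have z2 : f ≫ pY⟦(1:ℤ)⟧' = 0 := ih2 _ (factors_postcomp _ hf)
      calc f = f ≫ (𝟙 W)⟦(1:ℤ)⟧' := by rw [CategoryTheory.Functor.map_id, Category.comp_id]
        _ = (f ≫ pX⟦(1:ℤ)⟧') ≫ iX⟦(1:ℤ)⟧' + (f ≫ pY⟦(1:ℤ)⟧') ≫ iY⟦(1:ℤ)⟧' := by
            rw [← e3, CategoryTheory.Functor.map_add, Preadditive.comp_add,
              CategoryTheory.Functor.map_comp, CategoryTheory.Functor.map_comp, Category.assoc, Category.assoc]
        _ = 0 := by rw [z1, z2, zero_comp, zero_comp, add_zero]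
  | @smd Y₁ Y₂ h1 hdata ih1 =>
      obtain ⟨s, r, hsr⟩ := hdata
      intro f hf
      have z : f ≫ s⟦(1:ℤ)⟧' = 0 := ih1 _ (factors_postcomp _ hf)
      calc f = f ≫ (𝟙 Y₁)⟦(1:ℤ)⟧' := by rw [CategoryTheory.Functor.map_id, Category.comp_id]
        _ = (f ≫ s⟦(1:ℤ)⟧') ≫ r⟦(1:ℤ)⟧' := by
            rw [← hsr, CategoryTheory.Functor.map_comp, Category.assoc]
        _ = 0 := by rw [z, zero_comp]

lemma exists_biprod (A B : C) :
    ∃ (Z : C) (iA : A ⟶ Z) (iB : B ⟶ Z) (pA : Z ⟶ A) (pB : Z ⟶ B),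
      iA ≫ pA = 𝟙 A ∧ iB ≫ pB = 𝟙 B ∧ iA ≫ pB = 0 ∧ iB ≫ pA = 0 ∧
      pA ≫ iA + pB ≫ iB = 𝟙 Z := by
  obtain ⟨Z, u, v, mem⟩ := distinguished_cocone_triangle₂ (0 : B ⟶ A⟦(1:ℤ)⟧)
  have hmono : ∀ {W : C} (z : W ⟶ A), z ≫ u = 0 → z = 0 := by
    intro W z hz
    obtain ⟨g, hg⟩ := Triangle.coyoneda_exact₂ _ (inv_rot_of_distTriang _ mem) z
      (show z ≫ u = 0 from hz)
    rw [hg]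
    have h0 : (Triangle.mk u v (0 : B ⟶ A⟦(1:ℤ)⟧)).invRotate.mor₁ = 0 := by
      show -(0 : B ⟶ A⟦(1:ℤ)⟧)⟦(-1:ℤ)⟧' ≫ _ = 0
      simp
      exact zero_comp (X := B⟦(-1:ℤ)⟧) (Y := A⟦(1:ℤ)⟧⟦(-1:ℤ)⟧)
    rw [h0, comp_zero]; rfl
  obtain ⟨s, hs⟩ : ∃ s : B ⟶ Z, 𝟙 B = s ≫ v := Triangle.coyoneda_exact₃ _ mem (𝟙 B)
    (show 𝟙 B ≫ (0 : B ⟶ A⟦(1:ℤ)⟧) = 0 by simp)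
  obtain ⟨q, hq⟩ : ∃ q : Z ⟶ A, 𝟙 Z - v ≫ s = q ≫ u := Triangle.coyoneda_exact₂ _ mem (𝟙 Z - v ≫ s)
    (show (𝟙 Z - v ≫ s) ≫ v = 0 by
      rw [Preadditive.sub_comp, Category.id_comp, Category.assoc, ← hs,
        Category.comp_id, sub_self])
  have huv : u ≫ v = 0 := comp_distTriang_mor_zero₁₂ _ mem
  have hsq : s ≫ q = 0 := by
    apply hmono
    rw [Category.assoc, ← hq, Preadditive.comp_sub, Category.comp_id,
      ← Category.assoc, ← hs, Category.id_comp, sub_self]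
  have huq : u ≫ q = 𝟙 A := by
    have h1 : (u ≫ q - 𝟙 A) ≫ u = 0 := by
      rw [Preadditive.sub_comp, Category.id_comp, Category.assoc, ← hq,
        Preadditive.comp_sub, Category.comp_id, ← Category.assoc, huv, zero_comp,
        sub_zero, sub_self]
    have := hmono _ h1
    rwa [sub_eq_zero] at this
  exact ⟨Z, u, s, q, v, huq, hs.symm, huv, hsq, by rw [← hq]; abel⟩

/-- The key lemma: if `R ⊆ X⟦-1⟧ * X` then every object `M ∈ R * R⟦1⟧` with the two
relative-rigidity vanishing conditions belongs to `X`. -/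
lemma mem_of_crit {R X : Set C} (haddX : AddClosed X) (hX1 : RelRigid R X X)
    (h2 : R ⊆ star (shiftSet X (-1)) X) {M : C}
    (hM : M ∈ star R (shiftSet R 1)) (hM1 : RelRigid R {M} X) (hM2 : RelRigid R X {M}) :
    M ∈ X := by
  obtain ⟨R₁, B, fM, g₀, h₀, hR₁, hB, hT₀⟩ := hM
  obtain ⟨R₂, hR₂, ⟨ι⟩⟩ := hB
  set g : M ⟶ R₂⟦(1:ℤ)⟧ := g₀ ≫ ι.hom with hgdef
  set h : R₂⟦(1:ℤ)⟧ ⟶ R₁⟦(1:ℤ)⟧ := ι.inv ≫ h₀ with hhdef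
  have hT1 : Triangle.mk fM g h ∈ distTriang C := by
    refine isomorphic_distinguished _ hT₀ _ ?_
    refine Triangle.isoMk _ _ (Iso.refl _) (Iso.refl _) ι.symm ?_ ?_ ?_
    · show fM ≫ 𝟙 M = 𝟙 R₁ ≫ fM
      simp
    · show g ≫ ι.inv = 𝟙 M ≫ g₀
      simp [hgdef]
    · show h ≫ (𝟙 R₁)⟦(1:ℤ)⟧' = ι.inv ≫ h₀
      simp [hhdef]
  obtain ⟨A₁, B₁, w₁, a₁, b₁, hA₁, hB₁, hTR1⟩ := h2 hR₁
  obtain ⟨A₂, B₂, w₂, a₂, b₂, hA₂, hB₂, hTR2⟩ := h2 hR₂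
  have hA₁X : A₁⟦(1:ℤ)⟧ ∈ X := shiftNeg_one_mem_aux haddX hA₁
  have hA₂X : A₂⟦(1:ℤ)⟧ ∈ X := shiftNeg_one_mem_aux haddX hA₂
  have hrot1 : Triangle.mk a₁ b₁ (-w₁⟦(1:ℤ)⟧') ∈ distTriang C := rot_of_distTriang _ hTR1
  have hrot1' : Triangle.mk b₁ (-w₁⟦(1:ℤ)⟧') (-a₁⟦(1:ℤ)⟧') ∈ distTriang C :=
    rot_of_distTriang _ hrot1
  have hrot2 : Triangle.mk a₂ b₂ (-w₂⟦(1:ℤ)⟧') ∈ distTriang C := rot_of_distTriang _ hTR2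
  have hrot2' : Triangle.mk b₂ (-w₂⟦(1:ℤ)⟧') (-a₂⟦(1:ℤ)⟧') ∈ distTriang C :=
    rot_of_distTriang _ hrot2
  -- step 1 : `w₁ ≫ fM = 0`, hence `fM` factors through `a₁`
  have hw1f : w₁ ≫ fM = 0 := by
    have h0 : w₁⟦(1:ℤ)⟧' ≫ fM⟦(1:ℤ)⟧' = 0 := by
      apply hM2 hA₁X (Set.mem_singleton M)
      exact ⟨R₁⟦(1:ℤ)⟧, w₁⟦(1:ℤ)⟧', fM⟦(1:ℤ)⟧', shift1_mem hR₁, rfl⟩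
    apply (shiftFunctor C (1:ℤ)).map_injective
    rw [CategoryTheory.Functor.map_comp, CategoryTheory.Functor.map_zero, h0]
  obtain ⟨fbar, hfbar⟩ : ∃ fbar : B₁ ⟶ M, fM = a₁ ≫ fbar :=
    Triangle.yoneda_exact₂ _ hTR1 fM hw1f
  -- step 3 : `g` factors through `-w₂⟦1⟧'`
  have hgd : g ≫ a₂⟦(1:ℤ)⟧' = 0 := by
    apply hM1 (Set.mem_singleton M) hB₂
    exact ⟨R₂⟦(1:ℤ)⟧, g, a₂⟦(1:ℤ)⟧', shift1_mem hR₂, rfl⟩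
  obtain ⟨gbar, hgbar⟩ : ∃ gbar : M ⟶ A₂⟦(1:ℤ)⟧, g = gbar ≫ (-w₂⟦(1:ℤ)⟧') :=
    Triangle.coyoneda_exact₃ _ hrot2' g
    (show g ≫ (-a₂⟦(1:ℤ)⟧') = 0 by rw [Preadditive.comp_neg, hgd, neg_zero])
  -- step 4 : TR3 completion
  obtain ⟨φ, hφ₁, hφ₂⟩ : ∃ φ : A₁⟦(1:ℤ)⟧ ⟶ R₂⟦(1:ℤ)⟧,
      b₁ ≫ φ = fbar ≫ g ∧ (-w₁⟦(1:ℤ)⟧') ≫ (𝟙 R₁)⟦(1:ℤ)⟧' = φ ≫ h :=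
    complete_distinguished_triangle_morphism _ _ hrot1 hT1
    (𝟙 R₁) fbar (by
      show a₁ ≫ fbar = 𝟙 R₁ ≫ fM
      rw [Category.id_comp, ← hfbar])
  have hφh : φ ≫ h = -w₁⟦(1:ℤ)⟧' := by
    have := hφ₂
    rw [CategoryTheory.Functor.map_id, Category.comp_id] at this
    exact this.symm
  -- step 5/6 : `(-w₂⟦1⟧') ≫ h` factors through `-w₁⟦1⟧'`
  have hcr : ((-w₂⟦(1:ℤ)⟧') ≫ h) ≫ a₁⟦(1:ℤ)⟧' = 0 := by
    apply hX1 hA₂X hB₁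
    exact ⟨R₂⟦(1:ℤ)⟧, -w₂⟦(1:ℤ)⟧', h ≫ a₁⟦(1:ℤ)⟧', shift1_mem hR₂,
      Category.assoc _ _ _⟩
  obtain ⟨e, he⟩ : ∃ e : A₂⟦(1:ℤ)⟧ ⟶ A₁⟦(1:ℤ)⟧,
      (-w₂⟦(1:ℤ)⟧') ≫ h = e ≫ (-w₁⟦(1:ℤ)⟧') :=
    Triangle.coyoneda_exact₃ _ hrot1' ((-w₂⟦(1:ℤ)⟧') ≫ h)
    (show ((-w₂⟦(1:ℤ)⟧') ≫ h) ≫ (-a₁⟦(1:ℤ)⟧') = 0 by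
      rw [Preadditive.comp_neg, hcr, neg_zero])
  -- step 7 : `-w₂⟦1⟧' - e ≫ φ` factors through `g`
  obtain ⟨β', hβ'⟩ : ∃ β' : A₂⟦(1:ℤ)⟧ ⟶ M, -w₂⟦(1:ℤ)⟧' - e ≫ φ = β' ≫ g :=
    Triangle.coyoneda_exact₃ _ hT1 (-w₂⟦(1:ℤ)⟧' - e ≫ φ)
    (show (-w₂⟦(1:ℤ)⟧' - e ≫ φ) ≫ h = 0 by
      rw [Preadditive.sub_comp, he, Category.assoc, hφh, sub_self])
  -- step 8/9 : `gbar ≫ e` factors through `b₁`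
  have h8 : (gbar ≫ e) ≫ (-w₁⟦(1:ℤ)⟧') = 0 := by
    rw [Category.assoc, ← he, ← Category.assoc, ← hgbar]
    exact comp_distTriang_mor_zero₂₃ _ hT1
  obtain ⟨t, ht⟩ : ∃ t : M ⟶ B₁, gbar ≫ e = t ≫ b₁ :=
    Triangle.coyoneda_exact₂ _ hrot1' (gbar ≫ e) h8
  -- step 10 : `𝟙 M` decomposes
  have h10 : (𝟙 M - gbar ≫ β' - t ≫ fbar) ≫ g = 0 := by
    have e1 : (gbar ≫ β') ≫ g = g - gbar ≫ (e ≫ φ) := by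
      rw [Category.assoc, ← hβ', Preadditive.comp_sub, ← hgbar]
    have e2 : (t ≫ fbar) ≫ g = gbar ≫ (e ≫ φ) := by
      rw [Category.assoc, ← hφ₁, ← Category.assoc, ← ht, Category.assoc]
    rw [Preadditive.sub_comp, Preadditive.sub_comp, Category.id_comp, e1, e2]
    abel
  obtain ⟨n, hn⟩ : ∃ n : M ⟶ R₁, 𝟙 M - gbar ≫ β' - t ≫ fbar = n ≫ fM :=
    Triangle.coyoneda_exact₂ _ hT1 (𝟙 M - gbar ≫ β' - t ≫ fbar) h10
  have hfinal : 𝟙 M = gbar ≫ β' + (t + n ≫ a₁) ≫ fbar := by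
    have h1 : 𝟙 M = gbar ≫ β' + t ≫ fbar + n ≫ fM := by rw [← hn]; abel
    rw [Preadditive.add_comp, Category.assoc, ← hfbar]
    exact h1.trans (by abel)
  -- step 11 : `M` is a direct summand of `A₂⟦1⟧ ⊕ B₁`
  obtain ⟨Z, iA, iB, pA, pB, z1, z2, z3, z4, z5⟩ := exists_biprod (A₂⟦(1:ℤ)⟧) B₁
  have hZmem : addClosure X Z :=
    addClosure.sum (addClosure.of hA₂X) (addClosure.of hB₁) ⟨pA, pB, iA, iB, z1, z2, z5⟩
  refine haddX _ (addClosure.smd hZmem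
    ⟨gbar ≫ iA + (t + n ≫ a₁) ≫ iB, pA ≫ β' + pB ≫ fbar, ?_⟩)
  calc (gbar ≫ iA + (t + n ≫ a₁) ≫ iB) ≫ (pA ≫ β' + pB ≫ fbar)
      = gbar ≫ (iA ≫ pA) ≫ β' + gbar ≫ (iA ≫ pB) ≫ fbar
        + ((t + n ≫ a₁) ≫ (iB ≫ pA) ≫ β' + (t + n ≫ a₁) ≫ (iB ≫ pB) ≫ fbar) := by
        simp only [Preadditive.add_comp, Preadditive.comp_add, Category.assoc]
        abel
    _ = 𝟙 M := by
        rw [z1, z2, z3, z4]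
        simp only [Category.id_comp, zero_comp, comp_zero, add_zero, zero_add]
        exact hfinal.symm

lemma approx_of_sub {R X : Set C} (haddX : AddClosed X) (hX1 : RelRigid R X X)
    (h2 : R ⊆ star (shiftSet X (-1)) X) :
    ∀ R₀ ∈ R, ∃ (X₀ : C) (f : R₀ ⟶ X₀), IsLeftApprox X f := by
  intro R₀ hR₀
  obtain ⟨A, B₁, w, a, b, hA, hB₁, hT⟩ := h2 hR₀
  have hAX : A⟦(1:ℤ)⟧ ∈ X := shiftNeg_one_mem_aux haddX hA
  refine ⟨B₁, a, hB₁, ?_⟩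
  intro X' hX' g₂
  have h0 : w ≫ g₂ = 0 := by
    have h1 : w⟦(1:ℤ)⟧' ≫ g₂⟦(1:ℤ)⟧' = 0 := by
      apply hX1 hAX hX'
      exact ⟨R₀⟦(1:ℤ)⟧, w⟦(1:ℤ)⟧', g₂⟦(1:ℤ)⟧', shift1_mem hR₀, rfl⟩
    apply (shiftFunctor C (1:ℤ)).map_injective
    rw [CategoryTheory.Functor.map_comp, CategoryTheory.Functor.map_zero, h1]
  obtain ⟨h', hh'⟩ : ∃ h' : B₁ ⟶ X', g₂ = a ≫ h' := Triangle.yoneda_exact₂ _ hT g₂ h0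
  exact ⟨h', hh'.symm⟩

lemma oneImpTwo {R X : Set C} (hrig : Rigid R) (haddR : AddClosed R) (haddX : AddClosed X)
    (hX : TwoTermRigid R X)
    (hmax : ∀ M ∈ star R (shiftSet R 1),
      RelRigid R {Z | addClosure (insert M X) Z} {Z | addClosure (insert M X) Z} → M ∈ X)
    (happ : ∀ R₀ ∈ R, ∃ (X₀ : C) (f : R₀ ⟶ X₀), IsLeftApprox X f) :
    R ⊆ star (shiftSet X (-1)) X := by
  intro R₀ hR₀
  obtain ⟨X₀, fap, hfap⟩ := happ R₀ hR₀
  obtain ⟨V, gV, dV, hTT⟩ := distinguished_cocone_triangle fap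
  obtain ⟨R₁, B, u, v, w, hR₁, hBmem, hS⟩ := hX.2 hfap.1
  obtain ⟨R₂, hR₂, ⟨ιB⟩⟩ := hBmem
  obtain ⟨Q, cQ, eQ, hTQ⟩ := distinguished_cocone_triangle (u ≫ gV)
  -- `fap ≫ v = 0` by rigidity of `R`
  have hfv : fap ≫ v = 0 := by
    have h0 : (fap ≫ v) ≫ ιB.hom = 0 := hrig hR₀ hR₂ _
    rw [← cancel_mono ιB.hom, zero_comp]
    exact h0
  obtain ⟨vt, hvt⟩ : ∃ vt : V ⟶ B, v = gV ≫ vt := Triangle.yoneda_exact₂ _ hTT v hfv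
  obtain ⟨φ₁, hφ₁⟩ : ∃ φ₁ : Q ⟶ B, vt = cQ ≫ φ₁ := Triangle.yoneda_exact₂ _ hTQ vt (by
    show (u ≫ gV) ≫ vt = 0
    rw [Category.assoc, ← hvt]
    exact comp_distTriang_mor_zero₁₂ _ hS)
  obtain ⟨φ₂, hφ₂⟩ : ∃ φ₂ : Q ⟶ R₀⟦(1:ℤ)⟧, dV = cQ ≫ φ₂ :=
    Triangle.yoneda_exact₂ _ hTQ dV (by
    show (u ≫ gV) ≫ dV = 0
    have hgd0 : gV ≫ dV = 0 := comp_distTriang_mor_zero₂₃ _ hTT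
    rw [Category.assoc, hgd0, comp_zero])
  obtain ⟨χ, hχ₁, _⟩ : ∃ χ : B ⟶ Q,
      v ≫ χ = gV ≫ cQ ∧ w ≫ (𝟙 R₁)⟦(1:ℤ)⟧' = χ ≫ eQ :=
    complete_distinguished_triangle_morphism _ _ hS hTQ
    (𝟙 R₁) gV (by show u ≫ gV = 𝟙 R₁ ≫ (u ≫ gV); rw [Category.id_comp])
  obtain ⟨ς, hς⟩ : ∃ ς : R₀⟦(1:ℤ)⟧ ⟶ Q, vt ≫ χ - cQ = dV ≫ ς :=
    Triangle.yoneda_exact₃ _ hTT (vt ≫ χ - cQ) (by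
    show gV ≫ (vt ≫ χ - cQ) = 0
    rw [Preadditive.comp_sub, ← Category.assoc, ← hvt, hχ₁, sub_self])
  obtain ⟨ε, hε⟩ : ∃ ε : R₁⟦(1:ℤ)⟧ ⟶ Q, 𝟙 Q - φ₁ ≫ χ + φ₂ ≫ ς = eQ ≫ ε :=
    Triangle.yoneda_exact₃ _ hTQ (𝟙 Q - φ₁ ≫ χ + φ₂ ≫ ς) (by
    show cQ ≫ (𝟙 Q - φ₁ ≫ χ + φ₂ ≫ ς) = 0
    simp only [Preadditive.comp_add, Preadditive.comp_sub, Category.comp_id,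
      ← Category.assoc]
    rw [← hφ₁, ← hφ₂, ← hς]
    abel)
  -- `𝟙 Q` factors through objects of `R⟦1⟧`, so `Q⟦-1⟧ ∈ R`
  obtain ⟨Z₁, i₁, i₂, p₁, p₂, y1, y2, y3, y4, y5⟩ := exists_biprod B (R₀⟦(1:ℤ)⟧)
  obtain ⟨Z, j₁, j₂, q₁, q₂, w1, w2, w3, w4, w5⟩ := exists_biprod Z₁ (R₁⟦(1:ℤ)⟧)
  have hxy : (φ₁ ≫ (i₁ ≫ j₁) + φ₂ ≫ (i₂ ≫ j₁) + eQ ≫ j₂) ≫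
      ((q₁ ≫ p₁) ≫ χ - (q₁ ≫ p₂) ≫ ς + q₂ ≫ ε) = 𝟙 Q := by
    simp only [Preadditive.add_comp, Preadditive.comp_add, Preadditive.comp_sub,
      Preadditive.sub_comp, Category.assoc, reassoc_of% w1, reassoc_of% w2,
      reassoc_of% w3, reassoc_of% w4, reassoc_of% y1, reassoc_of% y2,
      reassoc_of% y3, reassoc_of% y4, zero_comp, comp_zero, sub_zero, add_zero,
      zero_add, zero_sub, neg_zero]
    rw [← hε]
    abel
  have hQmem : Q⟦(-1:ℤ)⟧ ∈ R := by
    have hB' : addClosure R (B⟦(-1:ℤ)⟧) := addClosure_iso (addClosure.of hR₂)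
      ((shiftShiftNeg R₂ (1:ℤ)).symm ≪≫ ((shiftFunctor C (-1:ℤ)).mapIso ιB).symm)
    have hR0' : addClosure R (R₀⟦(1:ℤ)⟧⟦(-1:ℤ)⟧) := addClosure_iso (addClosure.of hR₀)
      (shiftShiftNeg R₀ (1:ℤ)).symm
    have hR1' : addClosure R (R₁⟦(1:ℤ)⟧⟦(-1:ℤ)⟧) := addClosure_iso (addClosure.of hR₁)
      (shiftShiftNeg R₁ (1:ℤ)).symm
    have hZ₁' : addClosure R (Z₁⟦(-1:ℤ)⟧) := addClosure.sum hB' hR0'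
      ⟨p₁⟦(-1:ℤ)⟧', p₂⟦(-1:ℤ)⟧', i₁⟦(-1:ℤ)⟧', i₂⟦(-1:ℤ)⟧',
        by rw [← CategoryTheory.Functor.map_comp, y1, CategoryTheory.Functor.map_id],
        by rw [← CategoryTheory.Functor.map_comp, y2, CategoryTheory.Functor.map_id],
        by rw [← CategoryTheory.Functor.map_comp, ← CategoryTheory.Functor.map_comp, ← CategoryTheory.Functor.map_add, y5,
          CategoryTheory.Functor.map_id]⟩
    have hZ' : addClosure R (Z⟦(-1:ℤ)⟧) := addClosure.sum hZ₁' hR1'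
      ⟨q₁⟦(-1:ℤ)⟧', q₂⟦(-1:ℤ)⟧', j₁⟦(-1:ℤ)⟧', j₂⟦(-1:ℤ)⟧',
        by rw [← CategoryTheory.Functor.map_comp, w1, CategoryTheory.Functor.map_id],
        by rw [← CategoryTheory.Functor.map_comp, w2, CategoryTheory.Functor.map_id],
        by rw [← CategoryTheory.Functor.map_comp, ← CategoryTheory.Functor.map_comp, ← CategoryTheory.Functor.map_add, w5,
          CategoryTheory.Functor.map_id]⟩
    exact haddR _ (addClosure.smd hZ'
      ⟨(φ₁ ≫ (i₁ ≫ j₁) + φ₂ ≫ (i₂ ≫ j₁) + eQ ≫ j₂)⟦(-1:ℤ)⟧',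
        ((q₁ ≫ p₁) ≫ χ - (q₁ ≫ p₂) ≫ ς + q₂ ≫ ε)⟦(-1:ℤ)⟧',
        by rw [← CategoryTheory.Functor.map_comp, hxy, CategoryTheory.Functor.map_id]⟩)
  have hVstar : V ∈ star R (shiftSet R 1) :=
    ⟨R₁, Q, u ≫ gV, cQ, eQ, hR₁, ⟨Q⟦(-1:ℤ)⟧, hQmem, ⟨(shiftNegShift Q (1:ℤ)).symm⟩⟩, hTQ⟩
  -- relative rigidity of `add (insert V X)`
  have caseC : ∀ {X' : C}, X' ∈ X → ∀ ff : V ⟶ X'⟦(1:ℤ)⟧,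
      Factors (shiftSet R 1) ff → ff = 0 := by
    intro X' hX' ff hff
    have hgff : gV ≫ ff = 0 := hX.1 hfap.1 hX' _ (factors_precomp gV hff)
    obtain ⟨ξ, hξ⟩ : ∃ ξ : R₀⟦(1:ℤ)⟧ ⟶ X'⟦(1:ℤ)⟧, ff = dV ≫ ξ :=
      Triangle.yoneda_exact₃ _ hTT ff hgff
    obtain ⟨η, hη⟩ := hfap.2 hX' ((shiftFunctor C (1:ℤ)).preimage ξ)
    have hd : dV ≫ fap⟦(1:ℤ)⟧' = 0 := by
      have h' := comp_distTriang_mor_zero₂₃ _ (rot_of_distTriang _ hTT)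
      change dV ≫ (-fap⟦(1:ℤ)⟧') = 0 at h'
      rwa [Preadditive.comp_neg, neg_eq_zero] at h'
    rw [hξ, ← CategoryTheory.Functor.map_preimage (shiftFunctor C (1:ℤ)) ξ, ← hη, CategoryTheory.Functor.map_comp,
      ← Category.assoc, hd, zero_comp]
  have caseFact : ∀ {R' : C}, R' ∈ R → ∀ γ₀ : R' ⟶ V, ∃ δ : R' ⟶ X₀, γ₀ = δ ≫ gV := by
    intro R' hR' γ₀
    exact Triangle.coyoneda_exact₃ _ hTT γ₀ (hrig hR' hR₀ (γ₀ ≫ dV))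
  have caseB : ∀ {X' : C}, X' ∈ X → ∀ ff : X' ⟶ V⟦(1:ℤ)⟧,
      Factors (shiftSet R 1) ff → ff = 0 := by
    intro X' hX' ff hff
    obtain ⟨Z₀, β, γ, hZ₀, rfl⟩ := hff
    obtain ⟨R', hR', ⟨ιZ⟩⟩ := hZ₀
    obtain ⟨δ, hδ⟩ := caseFact hR' ((shiftFunctor C (1:ℤ)).preimage (ιZ.inv ≫ γ))
    have h1 : (shiftFunctor C (1:ℤ)).map
        ((shiftFunctor C (1:ℤ)).preimage (ιZ.inv ≫ γ)) = ιZ.inv ≫ γ :=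
      CategoryTheory.Functor.map_preimage _ _
    have h3 : γ = ιZ.hom ≫ (δ⟦(1:ℤ)⟧' ≫ gV⟦(1:ℤ)⟧') := by
      rw [← CategoryTheory.Functor.map_comp, ← hδ, h1, ← Category.assoc, ιZ.hom_inv_id,
        Category.id_comp]
    have hpre : (β ≫ ιZ.hom) ≫ δ⟦(1:ℤ)⟧' = 0 := by
      apply hX.1 hX' hfap.1
      exact ⟨R'⟦(1:ℤ)⟧, β ≫ ιZ.hom, δ⟦(1:ℤ)⟧', shift1_mem hR', rfl⟩
    rw [h3, ← Category.assoc, ← Category.assoc, hpre, zero_comp]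
  have caseD : ∀ ff : V ⟶ V⟦(1:ℤ)⟧, Factors (shiftSet R 1) ff → ff = 0 := by
    intro ff hff
    obtain ⟨Z₀, β, γ, hZ₀, rfl⟩ := hff
    obtain ⟨R', hR', ⟨ιZ⟩⟩ := hZ₀
    obtain ⟨δ, hδ⟩ := caseFact hR' ((shiftFunctor C (1:ℤ)).preimage (ιZ.inv ≫ γ))
    have h1 : (shiftFunctor C (1:ℤ)).map
        ((shiftFunctor C (1:ℤ)).preimage (ιZ.inv ≫ γ)) = ιZ.inv ≫ γ :=
      CategoryTheory.Functor.map_preimage _ _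
    have h3 : γ = ιZ.hom ≫ (δ⟦(1:ℤ)⟧' ≫ gV⟦(1:ℤ)⟧') := by
      rw [← CategoryTheory.Functor.map_comp, ← hδ, h1, ← Category.assoc, ιZ.hom_inv_id,
        Category.id_comp]
    have hpre : (β ≫ ιZ.hom) ≫ δ⟦(1:ℤ)⟧' = 0 := by
      apply caseC hfap.1
      exact ⟨R'⟦(1:ℤ)⟧, β ≫ ιZ.hom, δ⟦(1:ℤ)⟧', shift1_mem hR', rfl⟩
    rw [h3, ← Category.assoc, ← Category.assoc, hpre, zero_comp]
  have hrel : RelRigid R {Z' | addClosure (insert V X) Z'}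
      {Z' | addClosure (insert V X) Z'} := by
    intro P P' hP hP' ff hff
    have core : ∀ A ∈ insert V X, ∀ B' ∈ insert V X, ∀ f0 : A ⟶ B'⟦(1:ℤ)⟧,
        Factors (shiftSet R 1) f0 → f0 = 0 := by
      intro A hA B' hB' f0 hf0
      rcases Set.mem_insert_iff.mp hA with rfl | hA'
      · rcases Set.mem_insert_iff.mp hB' with rfl | hB''
        · exact caseD f0 hf0
        · exact caseC hB'' f0 hf0
      · rcases Set.mem_insert_iff.mp hB' with rfl | hB''
        · exact caseB hA' f0 hf0
        · exact hX.1 hA' hB'' f0 hf0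
    exact vanish_source (fun A hA => vanish_target (fun B' hB' => core A hA B' hB') hP')
      hP ff hff
  have hVX : V ∈ X := hmax V hVstar hrel
  exact ⟨V⟦(-1:ℤ)⟧, X₀, (Triangle.mk fap gV dV).invRotate.mor₁,
    (Triangle.mk fap gV dV).invRotate.mor₂, (Triangle.mk fap gV dV).invRotate.mor₃,
    ⟨V, hVX, ⟨Iso.refl _⟩⟩, hfap.1, inv_rot_of_distTriang _ hTT⟩

end Aux


theorem statement_8 (hKS : KrullSchmidtCat C) (R X : Set C)
    (hrig : Rigid R) (haddR : AddClosed R) (haddX : AddClosed X)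
    (hX : TwoTermRigid R X) :
    ((TwoTermMaximal R X ∧ ∀ R₀ ∈ R, ∃ (X₀ : C) (f : R₀ ⟶ X₀), IsLeftApprox X f) ↔
        R ⊆ star (shiftSet X (-1)) X) ∧
      (R ⊆ star (shiftSet X (-1)) X ↔ TwoTermWCT R X) := by
  have maximalOfSub : R ⊆ star (shiftSet X (-1)) X → TwoTermMaximal R X := by
    intro h2
    refine ⟨hX, ?_⟩
    intro M hMstar hRR
    refine mem_of_crit haddX hX.1 h2 hMstar ?_ ?_
    · intro A B hA hB f hf
      rw [Set.mem_singleton_iff] at hA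
      subst hA
      exact hRR (addClosure.of (Set.mem_insert _ _))
        (addClosure.of (Set.mem_insert_of_mem _ hB)) f hf
    · intro A B hA hB f hf
      rw [Set.mem_singleton_iff] at hB
      subst hB
      exact hRR (addClosure.of (Set.mem_insert_of_mem _ hA))
        (addClosure.of (Set.mem_insert _ _)) f hf
  constructor
  · constructor
    · rintro ⟨hmax, happ⟩
      exact oneImpTwo hrig haddR haddX hX hmax.2 happ
    · intro h2
      exact ⟨maximalOfSub h2, approx_of_sub haddX hX.1 h2⟩
  · constructor
    · intro h2
      refine ⟨hX.2, h2, fun M => ⟨fun hMX => ⟨hX.2 hMX, ?_, ?_⟩,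
        fun hcrit => mem_of_crit haddX hX.1 h2 hcrit.1 hcrit.2.1 hcrit.2.2⟩⟩
      · intro A B hA hB f hf
        rw [Set.mem_singleton_iff] at hA
        subst hA
        exact hX.1 hMX hB f hf
      · intro A B hA hB f hf
        rw [Set.mem_singleton_iff] at hB
        subst hB
        exact hX.1 hA hMX f hf
    · intro h3
      exact h3.2.1

end RelCT
end

section
/- Let X ⊆ R * R[1] be a subcategory such that every object of R[1] admits a right X-approximation. Then X is two-term maximal R[1]-rigid if and only if X is two-term weak R[1]-cluster tilting. -/
open CategoryTheory CategoryTheory.Limits CategoryTheory.Pretriangulated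

universe v u w

namespace RelCT

variable {C : Type u} [Category.{v} C] [Preadditive C] [HasZeroObject C]
  [HasShift C ℤ] [∀ n : ℤ, (CategoryTheory.shiftFunctor C n).Additive] [Pretriangulated C]

section Aux

lemma mem_of_iso {D : Set C} (hD : AddClosed D) {A B : C} (hA : A ∈ D) (e : A ≅ B) : B ∈ D :=
  hD B (addClosure.smd (addClosure.of hA) ⟨e.inv, e.hom, e.inv_hom_id⟩)

lemma hom_to_shiftSet_zero {R : Set C} (hrig : Rigid R) {A Z : C} (hA : A ∈ R)
    (hZ : Z ∈ shiftSet R 1) (f : A ⟶ Z) : f = 0 := by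
  obtain ⟨Y, hY, ⟨ψ⟩⟩ := hZ
  have h0 : f ≫ ψ.hom = 0 := hrig hA hY _
  calc f = (f ≫ ψ.hom) ≫ ψ.inv := by simp
    _ = 0 := by rw [h0]; simp

lemma Factors.pre {D : Set C} {A B W : C} {f : A ⟶ B} (h : Factors D f) (e : W ⟶ A) :
    Factors D (e ≫ f) := by
  obtain ⟨Z, g, h', hZ, rfl⟩ := h
  exact ⟨Z, e ≫ g, h', hZ, by simp⟩

lemma Factors.post {D : Set C} {A B W : C} {f : A ⟶ B} (h : Factors D f) (e : B ⟶ W) :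
    Factors D (f ≫ e) := by
  obtain ⟨Z, g, h', hZ, rfl⟩ := h
  exact ⟨Z, g, h' ≫ e, hZ, by simp⟩

lemma relRigid_addClosure (R D : Set C)
    (hgen : ∀ ⦃A B : C⦄, A ∈ D → B ∈ D → ∀ f : A ⟶ B⟦(1:ℤ)⟧,
      Factors (shiftSet R 1) f → f = 0) :
    RelRigid R {Z | addClosure D Z} {Z | addClosure D Z} := by
  have aux1 : ∀ ⦃A : C⦄, A ∈ D → ∀ ⦃B : C⦄, addClosure D B →
      ∀ f : A ⟶ B⟦(1:ℤ)⟧, Factors (shiftSet R 1) f → f = 0 := by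
    intro A hA B hB
    induction hB with
    | of h => exact hgen hA h
    | zero h =>
      intro f _
      exact ((shiftFunctor C (1:ℤ)).map_isZero h).eq_of_tgt f 0
    | @sum Y Z W hY hZ hdata ihY ihZ =>
      intro f hf
      obtain ⟨pY, pZ, iY, iZ, h1, h2, h3⟩ := hdata
      have e1 : f ≫ pY⟦(1:ℤ)⟧' = 0 := ihY _ (hf.post _)
      have e2 : f ≫ pZ⟦(1:ℤ)⟧' = 0 := ihZ _ (hf.post _)
      have key : f ≫ (pY ≫ iY + pZ ≫ iZ)⟦(1:ℤ)⟧' = f := by rw [h3]; simp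
      rw [← key, Functor.map_add, Functor.map_comp, Functor.map_comp, Preadditive.comp_add,
        ← Category.assoc, ← Category.assoc, e1, e2, zero_comp, zero_comp, add_zero]
    | @smd Y Z hZ hdata ih =>
      intro f hf
      obtain ⟨s, r, hsr⟩ := hdata
      have e1 : f ≫ s⟦(1:ℤ)⟧' = 0 := ih _ (hf.post _)
      have key : f ≫ (s ≫ r)⟦(1:ℤ)⟧' = f := by rw [hsr]; simp
      rw [← key, Functor.map_comp, ← Category.assoc, e1, zero_comp]
  intro A B hA hB f hf
  induction hA with
  | of h => exact aux1 h hB f hf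
  | zero h => exact h.eq_of_src f 0
  | @sum Y Z W hY hZ hdata ihY ihZ =>
    obtain ⟨pY, pZ, iY, iZ, h1, h2, h3⟩ := hdata
    have e1 : iY ≫ f = 0 := ihY _ (hf.pre _)
    have e2 : iZ ≫ f = 0 := ihZ _ (hf.pre _)
    have key : (pY ≫ iY + pZ ≫ iZ) ≫ f = f := by rw [h3]; simp
    rw [← key, Preadditive.add_comp, Category.assoc, Category.assoc, e1, e2,
      comp_zero, comp_zero, add_zero]
  | @smd Y Z hZ hdata ih =>
    obtain ⟨s, r, hsr⟩ := hdata
    have e1 : r ≫ f = 0 := ih _ (hf.pre _)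
    have key : (s ≫ r) ≫ f = f := by rw [hsr]; simp
    rw [← key, Category.assoc, e1, comp_zero]

lemma three_summand {R : Set C} (haddR : AddClosed R) {F A B E : C}
    (hA : A ∈ R) (hB : B ∈ R) (hE : E ∈ R)
    (e₁ : F ⟶ A) (f₁ : A ⟶ F) (e₂ : F ⟶ B) (f₂ : B ⟶ F) (e₃ : F ⟶ E) (f₃ : E ⟶ F)
    (h : e₁ ≫ f₁ + e₂ ≫ f₂ + e₃ ≫ f₃ = 𝟙 F) : F ∈ R := by
  apply haddR
  refine addClosure.smd (addClosure.sum (addClosure.of hA)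
    (addClosure.sum (addClosure.of hB) (addClosure.of hE)
      ⟨biprod.fst, biprod.snd, biprod.inl, biprod.inr, by simp, by simp, biprod.total⟩)
    ⟨biprod.fst, biprod.snd, biprod.inl, biprod.inr, by simp, by simp, biprod.total⟩)
    ⟨biprod.lift e₁ (biprod.lift e₂ e₃), biprod.desc f₁ (biprod.desc f₂ f₃), ?_⟩
  rw [biprod.lift_desc, biprod.lift_desc, ← h]
  abel

lemma self_rigid (R X : Set C) (haddX : AddClosed X)
    (hXR : R ⊆ star (shiftSet X (-1)) X)
    {M : C} (hM1 : RelRigid R {M} X) (hM2 : RelRigid R X {M})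
    (f : M ⟶ M⟦(1:ℤ)⟧) (hf : Factors (shiftSet R 1) f) : f = 0 := by
  obtain ⟨Z, g, h, hZ, rfl⟩ := hf
  obtain ⟨R₃, hR₃, ⟨ψ⟩⟩ := hZ
  obtain ⟨A, X₂, q, r, t, hA, hX₂, hT⟩ := hXR hR₃
  have hT3 := rot_of_distTriang _ (rot_of_distTriang _ (rot_of_distTriang _ hT))
  have h1 : (g ≫ ψ.hom) ≫ r⟦(1:ℤ)⟧' = 0 := by
    apply hM1 rfl hX₂
    exact ⟨R₃⟦(1:ℤ)⟧, g ≫ ψ.hom, r⟦(1:ℤ)⟧', ⟨R₃, hR₃, ⟨Iso.refl _⟩⟩, rfl⟩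
  obtain ⟨g₂, hg₂⟩ : ∃ g₂ : M ⟶ A⟦(1:ℤ)⟧, g ≫ ψ.hom = g₂ ≫ (-(q⟦(1:ℤ)⟧')) :=
    Triangle.coyoneda_exact₂ _ hT3 (g ≫ ψ.hom) (by
    show (g ≫ ψ.hom) ≫ (-(r⟦(1:ℤ)⟧')) = 0
    rw [Preadditive.comp_neg, h1, neg_zero])
  have hA1 : A⟦(1:ℤ)⟧ ∈ X := by
    obtain ⟨X₁, hX₁, ⟨ω⟩⟩ := hA
    exact mem_of_iso haddX hX₁
      (((shiftFunctor C (1:ℤ)).mapIso ω ≪≫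
        (shiftFunctorCompIsoId C (-1:ℤ) (1:ℤ) (by ring)).app X₁).symm)
  have hκ : ((-q⟦(1:ℤ)⟧') ≫ ψ.inv) ≫ h = 0 := by
    apply hM2 hA1 rfl
    exact ⟨Z, (-q⟦(1:ℤ)⟧') ≫ ψ.inv, h, ⟨R₃, hR₃, ⟨ψ⟩⟩, rfl⟩
  calc g ≫ h = ((g ≫ ψ.hom) ≫ ψ.inv) ≫ h := by simp
    _ = g₂ ≫ (((-q⟦(1:ℤ)⟧') ≫ ψ.inv) ≫ h) := by rw [hg₂]; simp
    _ = 0 := by rw [hκ, comp_zero]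

lemma key_sub (R X : Set C) (hrig : Rigid R) (haddR : AddClosed R) (haddX : AddClosed X)
    (hsub : X ⊆ star R (shiftSet R 1))
    (happ : ∀ A ∈ shiftSet R 1, ∃ (X₀ : C) (f : X₀ ⟶ A), IsRightApprox X f)
    (hXX : RelRigid R X X)
    (hmax : ∀ M ∈ star R (shiftSet R 1),
      RelRigid R {Z | addClosure (insert M X) Z} {Z | addClosure (insert M X) Z} → M ∈ X) :
    R ⊆ star (shiftSet X (-1)) X := by
  intro R₀ hR₀
  obtain ⟨X₀, c, hX₀X, happx⟩ := happ (R₀⟦(1:ℤ)⟧) ⟨R₀, hR₀, ⟨Iso.refl _⟩⟩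
  obtain ⟨V, a, b, hTA⟩ := distinguished_cocone_triangle₂ c
  obtain ⟨R₁, Z₂, u, v, w, hR₁, hZ₂, hTB⟩ := hsub hX₀X
  have huc : u ≫ c = 0 := hrig hR₁ hR₀ _
  obtain ⟨u'', hu''⟩ : ∃ u'' : R₁ ⟶ V, u = u'' ≫ b := Triangle.coyoneda_exact₃ _ hTA u huc
  obtain ⟨F, i, e, hTC⟩ := distinguished_cocone_triangle₁ (b ≫ v)
  have hab : a ≫ b = 0 := comp_distTriang_mor_zero₁₂ _ hTA
  have huv : u ≫ v = 0 := comp_distTriang_mor_zero₁₂ _ hTB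
  have hip : i ≫ (b ≫ v) = 0 := comp_distTriang_mor_zero₁₂ _ hTC
  -- F ∈ R
  obtain ⟨α, hα⟩ : ∃ α : R₀ ⟶ F, a = α ≫ i := Triangle.coyoneda_exact₂ _ hTC a (by
    show a ≫ (b ≫ v) = 0
    rw [← Category.assoc, hab, zero_comp])
  obtain ⟨β, hβ⟩ : ∃ β : R₁ ⟶ F, u'' = β ≫ i := Triangle.coyoneda_exact₂ _ hTC u'' (by
    show u'' ≫ (b ≫ v) = 0
    rw [← Category.assoc, ← hu'', huv])
  obtain ⟨s₂, hs₂⟩ : ∃ s₂ : F ⟶ R₁, i ≫ b = s₂ ≫ u := Triangle.coyoneda_exact₂ _ hTB (i ≫ b) (by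
    show (i ≫ b) ≫ v = 0
    rw [Category.assoc]; exact hip)
  obtain ⟨s₁, hs₁⟩ : ∃ s₁ : F ⟶ R₀, i - s₂ ≫ u'' = s₁ ≫ a := Triangle.coyoneda_exact₂ _ hTA (i - s₂ ≫ u'') (by
    show (i - s₂ ≫ u'') ≫ b = 0
    rw [Preadditive.sub_comp, Category.assoc, ← hu'', hs₂, sub_self])
  have hτ : (𝟙 F - s₁ ≫ α - s₂ ≫ β) ≫ i = 0 := by
    rw [Preadditive.sub_comp, Preadditive.sub_comp, Category.id_comp,
      Category.assoc, Category.assoc, ← hα, ← hβ, ← hs₁]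
    abel
  obtain ⟨g, m, hg⟩ : ∃ (g : F ⟶ Z₂⟦(-1:ℤ)⟧) (m : Z₂⟦(-1:ℤ)⟧ ⟶ F),
      𝟙 F - s₁ ≫ α - s₂ ≫ β = g ≫ m := by
    obtain ⟨g, hg⟩ := Triangle.coyoneda_exact₂ _ (inv_rot_of_distTriang _ hTC)
      (𝟙 F - s₁ ≫ α - s₂ ≫ β) (by
        show (𝟙 F - s₁ ≫ α - s₂ ≫ β) ≫ i = 0
        exact hτ)
    exact ⟨g, _, hg⟩
  obtain ⟨R₂, hR₂, ⟨ω⟩⟩ := hZ₂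
  have hZm : Z₂⟦(-1:ℤ)⟧ ∈ R :=
    mem_of_iso haddR hR₂
      (((shiftFunctor C (-1:ℤ)).mapIso ω ≪≫
        (shiftFunctorCompIsoId C (1:ℤ) (-1:ℤ) (by ring)).app R₂).symm)
  have hsum : s₁ ≫ α + s₂ ≫ β + g ≫ m = 𝟙 F := by
    rw [← hg]; abel
  have hFR : F ∈ R := three_summand haddR hR₀ hR₁ hZm s₁ α s₂ β g m hsum
  have hZ₂' : Z₂ ∈ shiftSet R 1 := ⟨R₂, hR₂, ⟨ω⟩⟩
  have hVstar : V ∈ star R (shiftSet R 1) := ⟨F, Z₂, i, b ≫ v, e, hFR, hZ₂', hTC⟩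
  -- rigidity generators
  have caseXV : ∀ ⦃A' : C⦄, A' ∈ X → ∀ f : A' ⟶ V⟦(1:ℤ)⟧,
      Factors (shiftSet R 1) f → f = 0 := by
    intro A' hA' f hf
    have h2 := rot_of_distTriang _ (rot_of_distTriang _ hTA)
    have hb1 : f ≫ b⟦(1:ℤ)⟧' = 0 := hXX hA' hX₀X _ (hf.post _)
    obtain ⟨g₀, hg₀⟩ : ∃ g₀ : A' ⟶ R₀⟦(1:ℤ)⟧, f = g₀ ≫ (-(a⟦(1:ℤ)⟧')) :=
      Triangle.coyoneda_exact₃ _ h2 f (by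
      show f ≫ (-(b⟦(1:ℤ)⟧')) = 0
      rw [Preadditive.comp_neg, hb1, neg_zero])
    obtain ⟨e₀, he₀⟩ := happx hA' g₀
    have hca : c ≫ (-(a⟦(1:ℤ)⟧')) = 0 := by
      have := comp_distTriang_mor_zero₂₃ _ (rot_of_distTriang _ hTA)
      dsimp [Triangle.rotate] at this
      exact this
    rw [hg₀, ← he₀, Category.assoc, hca, comp_zero]
  have caseVX : ∀ ⦃B' : C⦄, B' ∈ X → ∀ f : V ⟶ B'⟦(1:ℤ)⟧,
      Factors (shiftSet R 1) f → f = 0 := by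
    intro B' hB' f hf
    obtain ⟨Z, g', h', hZ, rfl⟩ := hf
    have hag : a ≫ g' = 0 := hom_to_shiftSet_zero hrig hR₀ hZ (a ≫ g')
    obtain ⟨g'', hg''⟩ : ∃ g'' : X₀ ⟶ Z, g' = b ≫ g'' := Triangle.yoneda_exact₂ _ hTA g' hag
    have hz : g'' ≫ h' = 0 := hXX hX₀X hB' _ ⟨Z, g'', h', hZ, rfl⟩
    rw [hg'', Category.assoc, hz, comp_zero]
  have caseVV : ∀ f : V ⟶ V⟦(1:ℤ)⟧, Factors (shiftSet R 1) f → f = 0 := by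
    intro f hf
    obtain ⟨Z, g', h', hZ, rfl⟩ := hf
    have hag : a ≫ g' = 0 := hom_to_shiftSet_zero hrig hR₀ hZ (a ≫ g')
    obtain ⟨g'', hg''⟩ : ∃ g'' : X₀ ⟶ Z, g' = b ≫ g'' := Triangle.yoneda_exact₂ _ hTA g' hag
    have hz : g'' ≫ h' = 0 := caseXV hX₀X _ ⟨Z, g'', h', hZ, rfl⟩
    rw [hg'', Category.assoc, hz, comp_zero]
  have hVX : V ∈ X := by
    apply hmax V hVstar
    apply relRigid_addClosure
    intro A' B' hA' hB' f hf
    rcases Set.mem_insert_iff.mp hA' with rfl | hA2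
    · rcases Set.mem_insert_iff.mp hB' with rfl | hB2
      · exact caseVV f hf
      · exact caseVX hB2 f hf
    · rcases Set.mem_insert_iff.mp hB' with rfl | hB2
      · exact caseXV hA2 f hf
      · exact hXX hA2 hB2 f hf
  exact ⟨X₀⟦(-1:ℤ)⟧, V, (Triangle.mk a b c).invRotate.mor₁, a,
    (Triangle.mk a b c).invRotate.mor₃, ⟨X₀, hX₀X, ⟨Iso.refl _⟩⟩, hVX,
    inv_rot_of_distTriang _ hTA⟩

end Aux

theorem statement_9 (hKS : KrullSchmidtCat C) (R X : Set C)
    (hrig : Rigid R) (haddR : AddClosed R) (haddX : AddClosed X)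
    (hsub : X ⊆ star R (shiftSet R 1))
    (happ : ∀ A ∈ shiftSet R 1, ∃ (X₀ : C) (f : X₀ ⟶ A), IsRightApprox X f) :
    TwoTermMaximal R X ↔ TwoTermWCT R X := by
  constructor
  · intro hmax
    have hXX : RelRigid R X X := hmax.1.1
    have hXR : R ⊆ star (shiftSet X (-1)) X :=
      key_sub R X hrig haddR haddX hsub happ hXX hmax.2
    refine ⟨hsub, hXR, fun M => ⟨fun hM => ⟨hsub hM, ?_, ?_⟩, ?_⟩⟩
    · intro A B hA hB f hf
      have hA' : A = M := hA
      subst hA'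
      exact hXX hM hB f hf
    · intro A B hA hB f hf
      have hB' : B = M := hB
      subst hB'
      exact hXX hA hM f hf
    · rintro ⟨hMstar, hM1, hM2⟩
      apply hmax.2 M hMstar
      apply relRigid_addClosure
      intro A B hA hB f hf
      rcases Set.mem_insert_iff.mp hA with rfl | hA2
      · rcases Set.mem_insert_iff.mp hB with rfl | hB2
        · exact self_rigid R X haddX hXR hM1 hM2 f hf
        · exact hM1 rfl hB2 f hf
      · rcases Set.mem_insert_iff.mp hB with rfl | hB2
        · exact hM2 hA2 rfl f hf
        · exact hXX hA2 hB2 f hf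
  · intro hwct
    refine ⟨⟨?_, hsub⟩, ?_⟩
    · intro A B hA hB f hf
      exact ((hwct.2.2 B).mp hB).2.2 hA rfl f hf
    · intro M hMstar hrel
      refine (hwct.2.2 M).mpr ⟨hMstar, ?_, ?_⟩
      · intro A B hA hB f hf
        have hA' : A = M := hA
        subst hA'
        exact hrel (addClosure.of (Set.mem_insert _ _))
          (addClosure.of (Set.mem_insert_of_mem _ hB)) f hf
      · intro A B hA hB f hf
        have hB' : B = M := hB
        subst hB'
        exact hrel (addClosure.of (Set.mem_insert_of_mem _ hA))
          (addClosure.of (Set.mem_insert _ _)) f hf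

end RelCT
end

section
/- Let X be an R[1]-functorially finite two-term R[1]-rigid subcategory. Then R(M_X) = R(X) and N_X ∩ R[1] = X ∩ R[1], where M_X is the 'co-Bongartz' completion obtained from left X-approximations of objects in R, and N_X is the completion obtained from right X-approximations of objects in R[1]. -/
open CategoryTheory CategoryTheory.Limits CategoryTheory.Pretriangulated

universe v u w

namespace RelCT

variable {C : Type u} [Category.{v} C] [Preadditive C] [HasZeroObject C]
  [HasShift C ℤ] [∀ n : ℤ, (CategoryTheory.shiftFunctor C n).Additive] [Pretriangulated C]

/-- If `A ∈ R` has no nonzero maps to `X`, it has no nonzero maps to `M_X`. -/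
lemma hom_zero_of_MData {R X : Set C} (hrig : Rigid R) (d : MData R X)
    {A : C} (hA : A ∈ R) (hA0 : ∀ B ∈ X, ∀ f : A ⟶ B, f = 0)
    {Y : C} (hY : addClosure (X ∪ {V | ∃ (R₀ : C) (h : R₀ ∈ R), V = d.cone R₀ h}) Y) :
    ∀ f : A ⟶ Y, f = 0 := by
  induction hY with
  | @of Y hY =>
    intro f
    rcases hY with hY | ⟨R₀, h₀, rfl⟩
    · exact hA0 Y hY f
    · have hw : f ≫ d.w R₀ h₀ = 0 := hrig hA h₀ _
      obtain ⟨g, hg⟩ := Triangle.coyoneda_exact₃ _ (d.tri R₀ h₀) f hw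
      have : g = 0 := hA0 _ (d.approx R₀ h₀).1 g
      rw [hg, this, zero_comp]; rfl
  | @zero Y hY => intro f; exact hY.eq_of_tgt f 0
  | @sum Y₁ Y₂ Z h₁ h₂ hdata ih₁ ih₂ =>
    intro f
    obtain ⟨p₁, p₂, i₁, i₂, _, _, htot⟩ := hdata
    calc f = f ≫ 𝟙 Z := (Category.comp_id f).symm
    _ = f ≫ (p₁ ≫ i₁ + p₂ ≫ i₂) := by rw [htot]
    _ = (f ≫ p₁) ≫ i₁ + (f ≫ p₂) ≫ i₂ := by simp [Preadditive.comp_add]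
    _ = 0 := by rw [ih₁ (f ≫ p₁), ih₂ (f ≫ p₂), zero_comp, zero_comp, add_zero]
  | @smd Y' Y hY hdata ih =>
    intro f
    obtain ⟨s, r, hsr⟩ := hdata
    calc f = f ≫ 𝟙 Y' := (Category.comp_id f).symm
    _ = (f ≫ s) ≫ r := by rw [← hsr]; simp
    _ = 0 := by rw [ih (f ≫ s), zero_comp]

/-- Every map from an object of `N_X` to an object of `R[1]` factors through `X`. -/
lemma factors_of_NData {R X : Set C} (hrig : Rigid R) (haddX : AddClosed X) (e : NData R X)
    {Z R₁ : C} (hR₁ : R₁ ∈ R) (ι : Z ≅ R₁⟦(1:ℤ)⟧)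
    {Y : C} (hY : addClosure (X ∪ {V | ∃ (R₀ : C) (h : R₀ ∈ R), V = e.cocone R₀ h}) Y) :
    ∀ f : Y ⟶ Z, ∃ (D : C) (g : Y ⟶ D) (h : D ⟶ Z), D ∈ X ∧ f = g ≫ h := by
  induction hY with
  | @of Y hY =>
    intro f
    rcases hY with hY | ⟨R₀, h₀, rfl⟩
    · exact ⟨Y, 𝟙 Y, f, hY, by simp⟩
    · have ha : e.a R₀ h₀ ≫ f = 0 := by
        have h1 : e.a R₀ h₀ ≫ f ≫ ι.hom = 0 := hrig h₀ hR₁ _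
        have h2 := h1 =≫ ι.inv
        simpa using h2
      obtain ⟨g, hg⟩ := Triangle.yoneda_exact₂ _ (e.tri R₀ h₀) f ha
      exact ⟨e.obj R₀ h₀, e.b R₀ h₀, g, (e.approx R₀ h₀).1, hg⟩
  | @zero Y hY =>
    intro f
    exact ⟨Y, 𝟙 Y, f, haddX Y (addClosure.zero hY), by simp⟩
  | @sum Y₁ Y₂ W h₁ h₂ hdata ih₁ ih₂ =>
    intro f
    obtain ⟨p₁, p₂, i₁, i₂, _, _, htot⟩ := hdata
    obtain ⟨D₁, g₁, k₁, hD₁, hf₁⟩ := ih₁ (i₁ ≫ f)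
    obtain ⟨D₂, g₂, k₂, hD₂, hf₂⟩ := ih₂ (i₂ ≫ f)
    refine ⟨D₁ ⊞ D₂, p₁ ≫ g₁ ≫ biprod.inl + p₂ ≫ g₂ ≫ biprod.inr,
      biprod.fst ≫ k₁ + biprod.snd ≫ k₂, ?_, ?_⟩
    · refine haddX _ (addClosure.sum (addClosure.of hD₁) (addClosure.of hD₂)
        ⟨biprod.fst, biprod.snd, biprod.inl, biprod.inr, by simp, by simp, biprod.total⟩)
    · have : (p₁ ≫ g₁ ≫ biprod.inl + p₂ ≫ g₂ ≫ biprod.inr) ≫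
          (biprod.fst ≫ k₁ + biprod.snd ≫ k₂)
          = p₁ ≫ (i₁ ≫ f) + p₂ ≫ (i₂ ≫ f) := by
        rw [hf₁, hf₂]
        simp [Preadditive.add_comp, Preadditive.comp_add]
      rw [this]
      calc f = 𝟙 W ≫ f := (Category.id_comp f).symm
      _ = (p₁ ≫ i₁ + p₂ ≫ i₂) ≫ f := by rw [htot]
      _ = p₁ ≫ (i₁ ≫ f) + p₂ ≫ (i₂ ≫ f) := by simp [Preadditive.add_comp]
  | @smd Y' Y hY hdata ih =>
    intro f
    obtain ⟨s, r, hsr⟩ := hdata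
    obtain ⟨D, g, k, hD, hf⟩ := ih (r ≫ f)
    refine ⟨D, s ≫ g, k, hD, ?_⟩
    calc f = 𝟙 Y' ≫ f := (Category.id_comp f).symm
    _ = s ≫ (r ≫ f) := by rw [← hsr]; simp
    _ = s ≫ g ≫ k := by rw [hf]
    _ = (s ≫ g) ≫ k := by simp

theorem statement_11 (hKS : KrullSchmidtCat C) (R X : Set C)
    (hrig : Rigid R) (haddR : AddClosed R) (haddX : AddClosed X)
    (hX : TwoTermRigid R X) (hff : RFunctoriallyFinite R X)
    (d : MData R X) (e : NData R X) :
    RZero R d.cat = RZero R X ∧ e.cat ∩ shiftSet R 1 = X ∩ shiftSet R 1 := by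
  constructor
  · ext A
    constructor
    · rintro ⟨hAR, h0⟩
      exact ⟨hAR, fun B hB f => h0 B (addClosure.of (Or.inl hB)) f⟩
    · rintro ⟨hAR, h0⟩
      exact ⟨hAR, fun B hB f => hom_zero_of_MData hrig d hAR h0 hB f⟩
  · ext Z
    constructor
    · rintro ⟨hZcat, hZsh⟩
      refine ⟨?_, hZsh⟩
      obtain ⟨R₁, hR₁, ⟨ι⟩⟩ := hZsh
      obtain ⟨D, g, h, hD, hfac⟩ := factors_of_NData hrig haddX e hR₁ ι hZcat (𝟙 Z)
      exact haddX Z (addClosure.smd (addClosure.of hD) ⟨g, h, hfac.symm⟩)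
    · rintro ⟨hZX, hZsh⟩
      exact ⟨addClosure.of (Or.inl hZX), hZsh⟩

end RelCT
end

section
/- Let X be an R[1]-functorially finite two-term R[1]-rigid subcategory and let Y ∈ M_X \ X be indecomposable. In the triangle Z --z--> X --x--> Y --y--> Z[1] where x is a minimal right X-approximation: (1) y factors through R[1]; (2) z is a minimal left M_X-approximation; (3) Z is indecomposable and Z ∉ X; (4) [R[1]](X, Z[1]) = 0. -/
open CategoryTheory CategoryTheory.Limits CategoryTheory.Pretriangulated

universe v u w

namespace RelCT

variable {C : Type u} [Category.{v} C] [Preadditive C] [HasZeroObject C]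
  [HasShift C ℤ] [∀ n : ℤ, (CategoryTheory.shiftFunctor C n).Additive] [Pretriangulated C]

section Aux

lemma isZero_shift_of_isZero {B : C} (h : IsZero B) (n : ℤ) : IsZero (B⟦n⟧) := by
  rw [IsZero.iff_id_eq_zero] at h ⊢
  rw [← CategoryTheory.Functor.map_id, h, CategoryTheory.Functor.map_zero]

lemma Factors.postcomp {D : Set C} {A B B' : C} {f : A ⟶ B} (hf : Factors D f) (g : B ⟶ B') :
    Factors D (f ≫ g) := by
  obtain ⟨W, a, b, hW, rfl⟩ := hf
  exact ⟨W, a, b ≫ g, hW, by simp⟩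

lemma Factors.precomp {D : Set C} {A A' B : C} {f : A ⟶ B} (hf : Factors D f) (g : A' ⟶ A) :
    Factors D (g ≫ f) := by
  obtain ⟨W, a, b, hW, rfl⟩ := hf
  exact ⟨W, g ≫ a, b, hW, by simp⟩

lemma factors_norm {R : Set C} {A B : C} {α : A ⟶ B⟦(1:ℤ)⟧}
    (h : Factors (shiftSet R 1) α) :
    ∃ (R₂ : C) (_ : R₂ ∈ R) (a : A ⟶ R₂⟦(1:ℤ)⟧) (b : R₂ ⟶ B), α = a ≫ b⟦(1:ℤ)⟧' := by
  obtain ⟨W, g, h', ⟨R₂, hR₂, ⟨e⟩⟩, rfl⟩ := h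
  obtain ⟨b, hb⟩ := (shiftFunctor C (1:ℤ)).map_surjective (e.inv ≫ h')
  exact ⟨R₂, hR₂, g ≫ e.hom, b, by rw [hb]; simp⟩

lemma iso_of_comp_iso {A B : C} (f : A ⟶ B) (g : B ⟶ A)
    (h1 : IsIso (f ≫ g)) (h2 : IsIso (g ≫ f)) : IsIso f := by
  have hr : f ≫ (g ≫ inv (f ≫ g)) = 𝟙 A := by rw [← Category.assoc, IsIso.hom_inv_id]
  have hl : (inv (g ≫ f) ≫ g) ≫ f = 𝟙 B := by rw [Category.assoc, IsIso.inv_hom_id]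
  have heq : inv (g ≫ f) ≫ g = g ≫ inv (f ≫ g) := by
    calc inv (g ≫ f) ≫ g
        = (inv (g ≫ f) ≫ g) ≫ (f ≫ (g ≫ inv (f ≫ g))) := by rw [hr, Category.comp_id]
      _ = ((inv (g ≫ f) ≫ g) ≫ f) ≫ (g ≫ inv (f ≫ g)) := by simp only [Category.assoc]
      _ = g ≫ inv (f ≫ g) := by rw [hl, Category.id_comp]
  exact ⟨g ≫ inv (f ≫ g), hr, by rw [← heq]; exact hl⟩

lemma local_of_indec (hKS : KrullSchmidtCat C) {W : C} (hW : Indec W) (φ : W ⟶ W) :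
    IsIso φ ∨ IsIso (𝟙 W - φ) := by
  obtain ⟨n, f, p, ι, h1, h2, h3⟩ := hKS W
  have hex : ∃ i, p i ≫ ι i = 𝟙 W := by
    by_contra hall
    push_neg at hall
    have hz : ∀ i, p i ≫ ι i = 0 := by
      intro i
      rcases hW.2 (p i ≫ ι i)
        (by rw [Category.assoc, ← Category.assoc (ι i), h1, Category.id_comp]) with h | h
      · exact h
      · exact absurd h (hall i)
    have hid : 𝟙 W = 0 := by rw [← h2]; exact Finset.sum_eq_zero (fun i _ => hz i)
    exact hW.1 ((IsZero.iff_id_eq_zero W).mpr hid)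
  obtain ⟨i, hi⟩ := hex
  have h4 : φ = p i ≫ (ι i ≫ φ ≫ p i) ≫ ι i := by
    calc φ = (p i ≫ ι i) ≫ φ ≫ (p i ≫ ι i) := by rw [hi, Category.id_comp, Category.comp_id]
      _ = p i ≫ (ι i ≫ φ ≫ p i) ≫ ι i := by simp only [Category.assoc]
  rcases h3 i (ι i ≫ φ ≫ p i) with h | h
  · left
    have hpi : IsIso (p i) := ⟨ι i, hi, h1 i⟩
    have hιi : IsIso (ι i) := ⟨p i, h1 i, hi⟩
    rw [h4]; infer_instance
  · right
    have hpi : IsIso (p i) := ⟨ι i, hi, h1 i⟩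
    have hιi : IsIso (ι i) := ⟨p i, h1 i, hi⟩
    have h5 : 𝟙 W - φ = p i ≫ (𝟙 (f i) - ι i ≫ φ ≫ p i) ≫ ι i := by
      calc 𝟙 W - φ = p i ≫ ι i - p i ≫ (ι i ≫ φ ≫ p i) ≫ ι i := by rw [hi, ← h4]
        _ = p i ≫ (𝟙 (f i) - ι i ≫ φ ≫ p i) ≫ ι i := by
            simp [Preadditive.sub_comp, Preadditive.comp_sub]
    rw [h5]; infer_instance

lemma summand_extract (hKS : KrullSchmidtCat C) {D : Set C} {Y : C} (hInd : Indec Y)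
    {Z : C} (hZ : addClosure D Z) :
    (∃ (s : Y ⟶ Z) (r : Z ⟶ Y), s ≫ r = 𝟙 Y) →
    ∃ B ∈ D, ∃ (s : Y ⟶ B) (r : B ⟶ Y), s ≫ r = 𝟙 Y := by
  induction hZ with
  | of h => exact fun hs => ⟨_, h, hs⟩
  | zero h =>
      rintro ⟨s, r, hsr⟩
      exfalso
      apply hInd.1
      rw [IsZero.iff_id_eq_zero, ← hsr, h.eq_of_tgt s 0, zero_comp]
  | sum hA hB hdata ihA ihB =>
      rintro ⟨s, r, hsr⟩
      obtain ⟨pA, pB, iA, iB, e1, e2, hsum⟩ := hdata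
      have key : (s ≫ pA) ≫ (iA ≫ r) + (s ≫ pB) ≫ (iB ≫ r) = 𝟙 Y := by
        rw [← hsr]
        calc (s ≫ pA) ≫ (iA ≫ r) + (s ≫ pB) ≫ (iB ≫ r)
            = s ≫ (pA ≫ iA + pB ≫ iB) ≫ r := by
              simp only [Preadditive.add_comp, Preadditive.comp_add, Category.assoc]
          _ = s ≫ r := by rw [hsum, Category.id_comp]
      rcases local_of_indec hKS hInd ((s ≫ pA) ≫ (iA ≫ r)) with h | h
      · exact ihA ⟨s ≫ pA, (iA ≫ r) ≫ inv ((s ≫ pA) ≫ (iA ≫ r)),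
          by rw [← Category.assoc, IsIso.hom_inv_id]⟩
      · have heq : 𝟙 Y - (s ≫ pA) ≫ (iA ≫ r) = (s ≫ pB) ≫ (iB ≫ r) := by
          rw [← key, add_sub_cancel_left]
        rw [heq] at h
        exact ihB ⟨s ≫ pB, (iB ≫ r) ≫ inv ((s ≫ pB) ≫ (iB ≫ r)),
          by rw [← Category.assoc, IsIso.hom_inv_id]⟩
  | smd hYm hdata ih =>
      rintro ⟨s, r, hsr⟩
      obtain ⟨s', r', hs'⟩ := hdata
      exact ih ⟨s ≫ s', r' ≫ r,
        by rw [Category.assoc, ← Category.assoc s', hs', Category.id_comp, hsr]⟩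

lemma mem_cone (hKS : KrullSchmidtCat C) {R X : Set C} (haddX : AddClosed X) (d : MData R X)
    {Y : C} (hY : Y ∈ d.cat) (hYX : Y ∉ X) (hInd : Indec Y) :
    ∃ (R₀ : C) (h : R₀ ∈ R) (s : Y ⟶ d.cone R₀ h) (r : d.cone R₀ h ⟶ Y), s ≫ r = 𝟙 Y := by
  obtain ⟨B, hB, s, r, hsr⟩ := summand_extract hKS hInd hY ⟨𝟙 Y, 𝟙 Y, by simp⟩
  rcases hB with hB | ⟨R₀, h₀, rfl⟩
  · exact absurd (haddX Y (addClosure.smd (addClosure.of hB) ⟨s, r, hsr⟩)) hYX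
  · exact ⟨R₀, h₀, s, r, hsr⟩

lemma rigid_X_cone {R X : Set C} (hrig : Rigid R) (hX1 : RelRigid R X X) (d : MData R X)
    {A : C} (hA : A ∈ X) (R₀ : C) (h₀ : R₀ ∈ R)
    (α : A ⟶ (d.cone R₀ h₀)⟦(1:ℤ)⟧) (hα : Factors (shiftSet R 1) α) : α = 0 := by
  obtain ⟨R₂, hR₂, a, b, rfl⟩ := factors_norm hα
  have hbw : b ≫ d.w R₀ h₀ = 0 := hrig hR₂ h₀ _
  obtain ⟨c₀, hc₀⟩ := Triangle.coyoneda_exact₃ _ (d.tri R₀ h₀) b hbw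
  change R₂ ⟶ d.obj R₀ h₀ at c₀; change b = c₀ ≫ d.g R₀ h₀ at hc₀
  have hzero : a ≫ c₀⟦(1:ℤ)⟧' = 0 :=
    hX1 hA (d.approx R₀ h₀).1 _ ⟨R₂⟦(1:ℤ)⟧, a, c₀⟦(1:ℤ)⟧', ⟨R₂, hR₂, ⟨Iso.refl _⟩⟩, rfl⟩
  rw [hc₀, CategoryTheory.Functor.map_comp, ← Category.assoc, hzero, zero_comp]

lemma rigid_cone_base {R X : Set C} (hrig : Rigid R) (hX1 : RelRigid R X X) (d : MData R X)
    (R₀ : C) (h₀ : R₀ ∈ R) {B : C}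
    (hB : B ∈ X ∪ {V | ∃ (R₁ : C) (h : R₁ ∈ R), V = d.cone R₁ h})
    (α : d.cone R₀ h₀ ⟶ B⟦(1:ℤ)⟧) (hα : Factors (shiftSet R 1) α) : α = 0 := by
  have hg : d.g R₀ h₀ ≫ α = 0 := by
    rcases hB with hB' | ⟨R₁, h₁, rfl⟩
    · exact hX1 (d.approx R₀ h₀).1 hB' _ (hα.precomp _)
    · exact rigid_X_cone hrig hX1 d (d.approx R₀ h₀).1 R₁ h₁ _ (hα.precomp _)
  obtain ⟨t, ht⟩ := Triangle.yoneda_exact₃ _ (d.tri R₀ h₀) α hg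
  change R₀⟦(1:ℤ)⟧ ⟶ B⟦(1:ℤ)⟧ at t; change α = d.w R₀ h₀ ≫ t at ht
  obtain ⟨t₀, ht₀⟩ := (shiftFunctor C (1:ℤ)).map_surjective t
  have h31 : d.w R₀ h₀ ≫ (d.f R₀ h₀)⟦(1:ℤ)⟧' = 0 := by
    have := comp_distTriang_mor_zero₃₁ _ (d.tri R₀ h₀)
    dsimp only [Triangle.mk] at this
    exact this
  rcases hB with hB' | ⟨R₁, h₁, rfl⟩
  · obtain ⟨u, hu⟩ := (d.approx R₀ h₀).2 hB' t₀
    rw [ht, ← ht₀, ← hu, CategoryTheory.Functor.map_comp, ← Category.assoc, h31, zero_comp]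
  · have ht₁ : t₀ ≫ d.w R₁ h₁ = 0 := hrig h₀ h₁ _
    obtain ⟨c, hc⟩ := Triangle.coyoneda_exact₃ _ (d.tri R₁ h₁) t₀ ht₁
    change R₀ ⟶ d.obj R₁ h₁ at c; change t₀ = c ≫ d.g R₁ h₁ at hc
    obtain ⟨u, hu⟩ := (d.approx R₀ h₀).2 (d.approx R₁ h₁).1 c
    rw [ht, ← ht₀, hc, ← hu, CategoryTheory.Functor.map_comp, CategoryTheory.Functor.map_comp, ← Category.assoc,
      ← Category.assoc, h31, zero_comp, zero_comp]

lemma rigid_close_tgt {R : Set C} {D : Set C} {A : C}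
    (hbase : ∀ B ∈ D, ∀ α : A ⟶ B⟦(1:ℤ)⟧, Factors (shiftSet R 1) α → α = 0)
    {B : C} (hB : addClosure D B) :
    ∀ α : A ⟶ B⟦(1:ℤ)⟧, Factors (shiftSet R 1) α → α = 0 := by
  induction hB with
  | of h => exact hbase _ h
  | zero h =>
      intro α _
      exact (isZero_shift_of_isZero h 1).eq_of_tgt α 0
  | sum h1 h2 hdata ih1 ih2 =>
      intro α hα
      obtain ⟨pA, pB, iA, iB, e1, e2, hsum⟩ := hdata
      have f1 : α ≫ pA⟦(1:ℤ)⟧' = 0 := ih1 _ (hα.postcomp _)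
      have f2 : α ≫ pB⟦(1:ℤ)⟧' = 0 := ih2 _ (hα.postcomp _)
      have : α ≫ (𝟙 _)⟦(1:ℤ)⟧' = 0 := by
        rw [← hsum, CategoryTheory.Functor.map_add, CategoryTheory.Functor.map_comp, CategoryTheory.Functor.map_comp,
          Preadditive.comp_add, ← Category.assoc, ← Category.assoc, f1, f2,
          zero_comp, zero_comp, add_zero]
      rw [CategoryTheory.Functor.map_id, Category.comp_id] at this
      exact this
  | smd h hdata ih =>
      intro α hα
      obtain ⟨s, r, hsr⟩ := hdata
      have f1 : α ≫ s⟦(1:ℤ)⟧' = 0 := ih _ (hα.postcomp _)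
      have : α ≫ (s ≫ r)⟦(1:ℤ)⟧' = 0 := by
        rw [CategoryTheory.Functor.map_comp, ← Category.assoc, f1, zero_comp]
      rw [hsr, CategoryTheory.Functor.map_id, Category.comp_id] at this
      exact this

lemma rigid_close {R : Set C} {D : Set C}
    (hbase : ∀ A ∈ D, ∀ B ∈ D, ∀ α : A ⟶ B⟦(1:ℤ)⟧, Factors (shiftSet R 1) α → α = 0)
    {A : C} (hA : addClosure D A) :
    ∀ {B : C}, addClosure D B → ∀ α : A ⟶ B⟦(1:ℤ)⟧, Factors (shiftSet R 1) α → α = 0 := by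
  induction hA with
  | of h => exact fun hB => rigid_close_tgt (hbase _ h) hB
  | zero h => exact fun _ α _ => h.eq_of_src α 0
  | sum h1 h2 hdata ih1 ih2 =>
      intro B hB α hα
      obtain ⟨pA, pB, iA, iB, e1, e2, hsum⟩ := hdata
      have f1 : iA ≫ α = 0 := ih1 hB _ (hα.precomp _)
      have f2 : iB ≫ α = 0 := ih2 hB _ (hα.precomp _)
      calc α = 𝟙 _ ≫ α := (Category.id_comp α).symm
        _ = 0 := by
          rw [← hsum, Preadditive.add_comp, Category.assoc, Category.assoc, f1, f2,
            comp_zero, comp_zero, add_zero]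
  | smd h hdata ih =>
      intro B hB α hα
      obtain ⟨s, r, hsr⟩ := hdata
      have f1 : r ≫ α = 0 := ih hB _ (hα.precomp _)
      calc α = 𝟙 _ ≫ α := (Category.id_comp α).symm
        _ = 0 := by rw [← hsr, Category.assoc, f1, comp_zero]

lemma Mrigid {R X : Set C} (hrig : Rigid R) (hX1 : RelRigid R X X) (d : MData R X)
    {A : C} (hA : A ∈ d.cat) {B : C} (hB : B ∈ d.cat) (α : A ⟶ B⟦(1:ℤ)⟧)
    (hα : Factors (shiftSet R 1) α) : α = 0 := by
  refine rigid_close ?_ hA hB α hα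
  intro A' hA' B' hB' β hβ
  rcases hA' with hA' | ⟨R₀, h₀, rfl⟩
  · rcases hB' with hB'' | ⟨R₁, h₁, rfl⟩
    · exact hX1 hA' hB'' β hβ
    · exact rigid_X_cone hrig hX1 d hA' R₁ h₁ β hβ
  · exact rigid_cone_base hrig hX1 d R₀ h₀ hB' β hβ

lemma min_iso {X : Set C} {X₀ Y : C} {x : X₀ ⟶ Y} (hX₀ : X₀ ∈ X)
    (hx : IsRightApprox X x) (hxmin : RightMinimal x)
    {c : Y ⟶ Y} (hc : IsIso c) {b : X₀ ⟶ X₀} (hbc : b ≫ x = x ≫ c) : IsIso b := by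
  obtain ⟨b', hb'⟩ := hx.2 hX₀ (x ≫ inv c)
  have h1 : (b ≫ b') ≫ x = x := by
    rw [Category.assoc, hb', ← Category.assoc, hbc, Category.assoc, IsIso.hom_inv_id,
      Category.comp_id]
  have h2 : (b' ≫ b) ≫ x = x := by
    rw [Category.assoc, hbc, ← Category.assoc, hb', Category.assoc, IsIso.inv_hom_id,
      Category.comp_id]
  exact iso_of_comp_iso b b' (hxmin _ h1) (hxmin _ h2)

end Aux

theorem statement_12 (hKS : KrullSchmidtCat C) (R X : Set C)
    (hrig : Rigid R) (haddR : AddClosed R) (haddX : AddClosed X)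
    (hX : TwoTermRigid R X) (hff : RFunctoriallyFinite R X)
    (d : MData R X) {Y Z X₀ : C} (hY : Y ∈ d.cat) (hYX : Y ∉ X) (hYind : Indec Y)
    (z : Z ⟶ X₀) (x : X₀ ⟶ Y) (y : Y ⟶ Z⟦(1:ℤ)⟧)
    (hT : Triangle.mk z x y ∈ distTriang C)
    (hX₀ : X₀ ∈ X) (hx : IsRightApprox X x) (hxmin : RightMinimal x) :
    Factors (shiftSet R 1) y ∧ (IsLeftApprox d.cat z ∧ LeftMinimal z) ∧
      (Indec Z ∧ Z ∉ X) ∧ RelRigid R X {Z} := by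
  have localY := fun φ => local_of_indec hKS hYind φ
  obtain ⟨R₀, hR₀, s, r, hsr⟩ := mem_cone hKS haddX d hY hYX hYind
  have hxy : x ≫ y = 0 := comp_distTriang_mor_zero₂₃ _ hT
  obtain ⟨h', hh'⟩ := hx.2 (d.approx R₀ hR₀).1 (d.g R₀ hR₀ ≫ r)
  have hgry : d.g R₀ hR₀ ≫ (r ≫ y) = 0 := by
    rw [← Category.assoc, ← hh', Category.assoc, hxy, comp_zero]
  obtain ⟨t, ht⟩ := Triangle.yoneda_exact₃ _ (d.tri R₀ hR₀) (r ≫ y) hgry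
  change R₀⟦(1:ℤ)⟧ ⟶ Z⟦(1:ℤ)⟧ at t; change r ≫ y = d.w R₀ hR₀ ≫ t at ht
  have part1 : Factors (shiftSet R 1) y := by
    refine ⟨R₀⟦(1:ℤ)⟧, s ≫ d.w R₀ hR₀, t, ⟨R₀, hR₀, ⟨Iso.refl _⟩⟩, ?_⟩
    rw [Category.assoc, ← ht, ← Category.assoc, hsr, Category.id_comp]
  have MR := fun {A} hA {B} hB α hα => Mrigid hrig hX.1 d (A := A) hA (B := B) hB α hα
  have hYin : Y ∈ d.cat := hY
  have hX₀in : X₀ ∈ d.cat := addClosure.of (Set.mem_union_left _ hX₀)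
  have hy0 : y ≠ 0 := by
    intro h0
    obtain ⟨sec, hsec⟩ := Triangle.coyoneda_exact₃ _ hT (𝟙 Y) (by change 𝟙 Y ≫ y = 0; rw [h0, comp_zero])
    change Y ⟶ X₀ at sec; change 𝟙 Y = sec ≫ x at hsec
    exact hYX (haddX Y (addClosure.smd (addClosure.of hX₀) ⟨sec, x, hsec.symm⟩))
  have happrox : IsLeftApprox d.cat z := by
    refine ⟨hX₀in, ?_⟩
    intro M hM φ
    have hyφ : y ≫ φ⟦(1:ℤ)⟧' = 0 := MR hYin hM _ (part1.postcomp _)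
    obtain ⟨g', hg'⟩ := Triangle.yoneda_exact₃ _ (rot_of_distTriang _ hT) (φ⟦(1:ℤ)⟧')
      (by change y ≫ φ⟦(1:ℤ)⟧' = 0; exact hyφ)
    change X₀⟦(1:ℤ)⟧ ⟶ M⟦(1:ℤ)⟧ at g'; change φ⟦(1:ℤ)⟧' = (-(z⟦(1:ℤ)⟧')) ≫ g' at hg'
    obtain ⟨ξ, hξ⟩ := (shiftFunctor C (1:ℤ)).map_surjective g'
    refine ⟨-ξ, ?_⟩
    apply (shiftFunctor C (1:ℤ)).map_injective
    rw [CategoryTheory.Functor.map_comp, CategoryTheory.Functor.map_neg, hξ, hg']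
    simp
  have hmin : LeftMinimal z := by
    intro u hu
    obtain ⟨c, hc₁, hc₂⟩ : ∃ c : Y ⟶ Y, x ≫ c = u ≫ x ∧ y ≫ (𝟙 Z)⟦(1:ℤ)⟧' = c ≫ y :=
      complete_distinguished_triangle_morphism _ _ hT hT (𝟙 Z) u
        (by change z ≫ u = 𝟙 Z ≫ z; rw [hu, Category.id_comp])
    have hcy : c ≫ y = y := by rw [← hc₂, CategoryTheory.Functor.map_id, Category.comp_id]
    rcases localY c with hc | hc
    · exact min_iso hX₀ hx hxmin hc hc₁.symm
    · exfalso
      apply hy0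
      have h0 : (𝟙 Y - c) ≫ y = 0 := by
        rw [Preadditive.sub_comp, Category.id_comp, hcy, sub_self]
      calc y = 𝟙 Y ≫ y := (Category.id_comp y).symm
        _ = (inv (𝟙 Y - c) ≫ (𝟙 Y - c)) ≫ y := by rw [IsIso.inv_hom_id]
        _ = 0 := by rw [Category.assoc, h0, comp_zero]
  have hZX : Z ∉ X := by
    intro hZ
    exact hy0 (MR hYin (addClosure.of (Set.mem_union_left _ hZ)) y part1)
  have hZnz : ¬ IsZero Z := by
    intro h0
    exact hy0 ((isZero_shift_of_isZero h0 1).eq_of_tgt y 0)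
  have locZ : ∀ φ : Z ⟶ Z, IsIso φ ∨ IsIso (𝟙 Z - φ) := by
    intro φ
    obtain ⟨b, hb⟩ := happrox.2 hX₀in (φ ≫ z)
    obtain ⟨c, hc₁, hc₂⟩ : ∃ c : Y ⟶ Y, x ≫ c = b ≫ x ∧ y ≫ φ⟦(1:ℤ)⟧' = c ≫ y :=
      complete_distinguished_triangle_morphism _ _ hT hT φ b (by change z ≫ b = φ ≫ z; rw [hb])
    rcases localY c with hc | hc
    · left
      have hbiso : IsIso b := min_iso hX₀ hx hxmin hc hc₁.symm
      exact isIso₁_of_isIso₂₃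
        { hom₁ := φ, hom₂ := b, hom₃ := c, comm₁ := by change z ≫ b = φ ≫ z; rw [hb],
          comm₂ := by exact hc₁, comm₃ := by exact hc₂ } hT hT hbiso hc
    · right
      have hbc : (𝟙 X₀ - b) ≫ x = x ≫ (𝟙 Y - c) := by
        rw [Preadditive.sub_comp, Preadditive.comp_sub, Category.id_comp, Category.comp_id, hc₁]
      have hbiso : IsIso (𝟙 X₀ - b) := min_iso hX₀ hx hxmin hc hbc
      have hcomm₁ : z ≫ (𝟙 X₀ - b) = (𝟙 Z - φ) ≫ z := by
        rw [Preadditive.comp_sub, Preadditive.sub_comp, Category.comp_id, Category.id_comp, hb]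
      have hcomm₃ : y ≫ (𝟙 Z - φ)⟦(1:ℤ)⟧' = (𝟙 Y - c) ≫ y := by
        rw [CategoryTheory.Functor.map_sub, CategoryTheory.Functor.map_id, Preadditive.comp_sub, Preadditive.sub_comp,
          Category.comp_id, Category.id_comp, hc₂]
      exact isIso₁_of_isIso₂₃
        { hom₁ := 𝟙 Z - φ, hom₂ := 𝟙 X₀ - b, hom₃ := 𝟙 Y - c, comm₁ := by exact hcomm₁,
          comm₂ := by exact hbc.symm, comm₃ := by exact hcomm₃ } hT hT hbiso hc
  have hZind : Indec Z := by
    refine ⟨hZnz, ?_⟩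
    intro p hp
    rcases locZ p with h | h
    · exact Or.inr ((cancel_epi p).mp (by rw [hp, Category.comp_id]))
    · left
      have h0 : (𝟙 Z - p) ≫ p = 0 := by
        rw [Preadditive.sub_comp, Category.id_comp, hp, sub_self]
      calc p = 𝟙 Z ≫ p := (Category.id_comp p).symm
        _ = (inv (𝟙 Z - p) ≫ (𝟙 Z - p)) ≫ p := by rw [IsIso.inv_hom_id]
        _ = 0 := by rw [Category.assoc, h0, comp_zero]
  have part4 : RelRigid R X {Z} := by
    intro A B hA hB α hα
    have hB' : B = Z := hB
    subst hB'
    have h1 : α ≫ z⟦(1:ℤ)⟧' = 0 := hX.1 hA hX₀ _ (hα.postcomp _)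
    obtain ⟨β, hβ⟩ := Triangle.coyoneda_exact₃ _ (rot_of_distTriang _ hT) α
      (by change α ≫ (-(z⟦(1:ℤ)⟧')) = 0; rw [Preadditive.comp_neg, h1, neg_zero])
    change A ⟶ Y at β; change α = β ≫ y at hβ
    obtain ⟨γ, hγ⟩ := hx.2 hA β
    rw [hβ, ← hγ, Category.assoc, hxy, comp_zero]
  exact ⟨part1, ⟨happrox, hmin⟩, ⟨hZind, hZX⟩, part4⟩

end RelCT
end

section
/- Assume A = R * R[1] and that the additive quotient A/R[1] is abelian. Then the image of R in A/R[1] is the subcategory of enough projective objects of A/R[1]: every object of the image of R is projective, and every object of A/R[1] receives an epimorphism from an object in the image of R. -/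
open CategoryTheory CategoryTheory.Limits CategoryTheory.Pretriangulated

universe v u w

namespace RelCT

variable {C : Type u} [Category.{v} C] [Preadditive C] [HasZeroObject C]
  [HasShift C ℤ] [∀ n : ℤ, (CategoryTheory.shiftFunctor C n).Additive] [Pretriangulated C]

/-- The full subcategory on `R * R[1]`. -/
abbrev TwoTermSub (R : Set C) := ObjectProperty.FullSubcategory (fun Z : C => Z ∈ star R (shiftSet R 1))

/-- Morphisms are identified when their difference factors through `R[1]`. -/
def homRel (R : Set C) : HomRel (TwoTermSub R) := fun {A B} f g =>
  Factors (shiftSet R 1) (f.hom - g.hom)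

/-- the image, in the additive quotient `(R*R[1])/R[1]`, of a collection of objects. -/
def quotSet (R U : Set C) : Set (CategoryTheory.Quotient (homRel R)) :=
  {Z | Z.as.obj ∈ U}


section Auxiliary

open ZeroObject

variable (R : Set C)

lemma zero_mem_shiftSet (haddR : AddClosed R) : (0 : C) ∈ shiftSet R 1 := by
  refine ⟨0, haddR 0 (addClosure.zero (isZero_zero C)), ⟨?_⟩⟩
  exact (isZero_zero C).iso ((shiftFunctor C (1 : ℤ)).map_isZero (isZero_zero C))

lemma shiftSet_biprod (haddR : AddClosed R) {Z₁ Z₂ : C}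
    (h₁ : Z₁ ∈ shiftSet R 1) (h₂ : Z₂ ∈ shiftSet R 1) : (Z₁ ⊞ Z₂) ∈ shiftSet R 1 := by
  obtain ⟨Y₁, hY₁, ⟨e₁⟩⟩ := h₁
  obtain ⟨Y₂, hY₂, ⟨e₂⟩⟩ := h₂
  haveI : PreservesBinaryBiproducts (shiftFunctor C (1 : ℤ)) :=
    preservesBinaryBiproducts_of_preservesBiproducts _
  refine ⟨Y₁ ⊞ Y₂, haddR _ (addClosure.sum (.of hY₁) (.of hY₂)
    ⟨biprod.fst, biprod.snd, biprod.inl, biprod.inr, by simp, by simp, by simp [biprod.total]⟩),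
    ⟨biprod.mapIso e₁ e₂ ≪≫ ((shiftFunctor C (1 : ℤ)).mapBiprod Y₁ Y₂).symm⟩⟩

lemma factors_zero (haddR : AddClosed R) {A B : C} :
    Factors (shiftSet R 1) (0 : A ⟶ B) :=
  ⟨0, 0, 0, zero_mem_shiftSet R haddR, by simp⟩

lemma factors_neg {A B : C} {f : A ⟶ B} (hf : Factors (shiftSet R 1) f) :
    Factors (shiftSet R 1) (-f) := by
  obtain ⟨Z, a, b, hZ, rfl⟩ := hf
  exact ⟨Z, -a, b, hZ, by simp⟩

lemma factors_add (haddR : AddClosed R) {A B : C} {f g : A ⟶ B}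
    (hf : Factors (shiftSet R 1) f) (hg : Factors (shiftSet R 1) g) :
    Factors (shiftSet R 1) (f + g) := by
  obtain ⟨Z₁, a₁, b₁, hZ₁, rfl⟩ := hf
  obtain ⟨Z₂, a₂, b₂, hZ₂, rfl⟩ := hg
  exact ⟨Z₁ ⊞ Z₂, biprod.lift a₁ a₂, biprod.desc b₁ b₂,
    shiftSet_biprod R haddR hZ₁ hZ₂, by simp⟩

lemma congruence (haddR : AddClosed R) : CategoryTheory.Congruence (homRel R) where
  equivalence := by
    refine ⟨fun f => ?_, fun {f g} h => ?_, fun {f g h} h₁ h₂ => ?_⟩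
    · show Factors (shiftSet R 1) _
      rw [sub_self]
      exact factors_zero R haddR
    · show Factors (shiftSet R 1) _
      have := factors_neg R h
      rwa [neg_sub] at this
    · show Factors (shiftSet R 1) _
      have := factors_add R haddR h₁ h₂
      rwa [sub_add_sub_cancel] at this
  comp_left := by
    intro X Y Z f g g' h
    show Factors (shiftSet R 1) _
    obtain ⟨W, a, b, hW, hab⟩ := h
    refine ⟨W, f.hom ≫ a, b, hW, ?_⟩
    show f.hom ≫ g.hom -
      f.hom ≫ g'.hom = _
    rw [← Preadditive.comp_sub, hab, Category.assoc]
  comp_right := by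
    intro X Y Z f f' g h
    show Factors (shiftSet R 1) _
    obtain ⟨W, a, b, hW, hab⟩ := h
    refine ⟨W, a, b ≫ g.hom, hW, ?_⟩
    show f.hom ≫ g.hom -
      f'.hom ≫ g.hom = _
    rw [← Preadditive.sub_comp, hab, Category.assoc]

lemma eq_zero_of_factors (hrig : Rigid R) {A B : C} (hA : A ∈ R) {f : A ⟶ B}
    (hf : Factors (shiftSet R 1) f) : f = 0 := by
  obtain ⟨Z, a, b, ⟨Y, hY, ⟨e⟩⟩, rfl⟩ := hf
  have h0 : a ≫ e.hom = 0 := hrig hA hY _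
  have ha : a = 0 := by
    rw [← Category.comp_id a, ← e.hom_inv_id, ← Category.assoc, h0, zero_comp]
  rw [ha, zero_comp]

lemma mem_star_of_mem_R (haddR : AddClosed R) {A : C} (hA : A ∈ R) :
    A ∈ star R (shiftSet R 1) :=
  ⟨A, 0, 𝟙 A, 0, 0, hA, zero_mem_shiftSet R haddR, contractible_distinguished A⟩

lemma epi_of_triangle (hrig : Rigid R) (haddR : AddClosed R) {P M : TwoTermSub R}
    (hP : P.obj ∈ R) (f : P.obj ⟶ M.obj) {B : C} (g : M.obj ⟶ B) (w : B ⟶ P.obj⟦(1 : ℤ)⟧)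
    (hB : B ∈ shiftSet R 1) (htri : Triangle.mk f g w ∈ distTriang C) :
    Epi ((CategoryTheory.Quotient.functor (homRel R)).map (ObjectProperty.homMk (f) : P ⟶ M)) := by
  haveI : CategoryTheory.Congruence (homRel R) := congruence R haddR
  constructor
  intro W u v huv
  obtain ⟨u₀, rfl⟩ := (CategoryTheory.Quotient.functor (homRel R)).map_surjective
    (X := M) (Y := W.as) u
  obtain ⟨v₀, rfl⟩ := (CategoryTheory.Quotient.functor (homRel R)).map_surjective
    (X := M) (Y := W.as) v
  rw [← Functor.map_comp, ← Functor.map_comp,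
    CategoryTheory.Quotient.functor_map_eq_iff] at huv
  have hfac : Factors (shiftSet R 1)
      (f ≫ (u₀.hom - v₀.hom)) := by
    obtain ⟨Z, a, b, hZ, hab⟩ := huv
    exact ⟨Z, a, b, hZ, by rw [Preadditive.comp_sub]; exact hab⟩
  have hzero : f ≫ (u₀.hom - v₀.hom) = 0 :=
    eq_zero_of_factors R hrig hP hfac
  obtain ⟨k, hk⟩ := Triangle.yoneda_exact₂ _ htri
    (u₀.hom - v₀.hom) hzero
  rw [CategoryTheory.Quotient.functor_map_eq_iff]
  exact ⟨B, g, k, hB, hk⟩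

lemma splitting (hrig : Rigid R) (haddR : AddClosed R) {E P : TwoTermSub R}
    (hE : E.obj ∈ R) (hP : P.obj ∈ R) (e : E.obj ⟶ P.obj)
    (he : Epi ((CategoryTheory.Quotient.functor (homRel R)).map (ObjectProperty.homMk (e) : E ⟶ P))) :
    ∃ s : P.obj ⟶ E.obj, s ≫ e = 𝟙 P.obj := by
  haveI : CategoryTheory.Congruence (homRel R) := congruence R haddR
  obtain ⟨Cn, u, v, htri⟩ := Pretriangulated.distinguished_cocone_triangle e
  have hCn : Cn ∈ star R (shiftSet R 1) := by
    refine ⟨P.obj, E.obj⟦(1 : ℤ)⟧, u, v, (Triangle.mk e u v).rotate.mor₃, hP,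
      ⟨E.obj, hE, ⟨Iso.refl _⟩⟩, ?_⟩
    exact rot_of_distTriang _ htri
  let Cn' : TwoTermSub R := ⟨Cn, hCn⟩
  have hcomp : e ≫ u = 0 := comp_distTriang_mor_zero₁₂ _ htri
  have h2 : (CategoryTheory.Quotient.functor (homRel R)).map (ObjectProperty.homMk (u) : P ⟶ Cn')
      = (CategoryTheory.Quotient.functor (homRel R)).map (ObjectProperty.homMk (0) : P ⟶ Cn') := by
    apply he.left_cancellation
    rw [← Functor.map_comp, ← Functor.map_comp]
    apply congrArg
    apply ObjectProperty.hom_ext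
    show e ≫ u = e ≫ (0 : P.obj ⟶ Cn)
    rw [hcomp, comp_zero]
  rw [CategoryTheory.Quotient.functor_map_eq_iff] at h2
  have hu : u = 0 := by
    apply eq_zero_of_factors R hrig hP
    obtain ⟨Z, a, b, hZ, hab⟩ := h2
    refine ⟨Z, a, b, hZ, ?_⟩
    rw [← sub_zero u]
    exact hab
  obtain ⟨s, hs⟩ := Triangle.coyoneda_exact₂ _ htri (𝟙 P.obj)
    (by show 𝟙 P.obj ≫ u = 0; rw [hu, comp_zero])
  exact ⟨s, hs.symm⟩

lemma section_exists (hrig : Rigid R) (haddR : AddClosed R) {E P : TwoTermSub R}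
    (hP : P.obj ∈ R) (e : E.obj ⟶ P.obj)
    (he : Epi ((CategoryTheory.Quotient.functor (homRel R)).map (ObjectProperty.homMk (e) : E ⟶ P))) :
    ∃ σ : (CategoryTheory.Quotient.functor (homRel R)).obj P ⟶
        (CategoryTheory.Quotient.functor (homRel R)).obj E,
      σ ≫ (CategoryTheory.Quotient.functor (homRel R)).map (ObjectProperty.homMk (e) : E ⟶ P) = 𝟙 _ := by
  obtain ⟨A, B, α, β, w, hA, hB, htri⟩ := E.property
  let A' : TwoTermSub R := ⟨A, mem_star_of_mem_R R haddR hA⟩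
  have hepiα : Epi ((CategoryTheory.Quotient.functor (homRel R)).map
      (ObjectProperty.homMk (α) : A' ⟶ E)) := epi_of_triangle R hrig haddR (P := A') (M := E) hA α β w hB htri
  have hcomp : Epi ((CategoryTheory.Quotient.functor (homRel R)).map
      (ObjectProperty.homMk (α ≫ e) : A' ⟶ P)) := by
    have : (CategoryTheory.Quotient.functor (homRel R)).map (ObjectProperty.homMk (α ≫ e) : A' ⟶ P)
        = (CategoryTheory.Quotient.functor (homRel R)).map (ObjectProperty.homMk (α) : A' ⟶ E) ≫
          (CategoryTheory.Quotient.functor (homRel R)).map (ObjectProperty.homMk (e) : E ⟶ P) :=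
      Functor.map_comp _ _ _
    rw [this]
    exact epi_comp _ _
  obtain ⟨s, hs⟩ := splitting R hrig haddR (E := A') (P := P) hA hP (α ≫ e) hcomp
  refine ⟨(CategoryTheory.Quotient.functor (homRel R)).map (ObjectProperty.homMk (s ≫ α) : P ⟶ E), ?_⟩
  have h : (ObjectProperty.homMk (s ≫ α) : P ⟶ E) ≫ (ObjectProperty.homMk (e) : E ⟶ P) = 𝟙 P := by
    apply ObjectProperty.hom_ext
    show (s ≫ α) ≫ e = 𝟙 P.obj
    rw [Category.assoc]
    exact hs
  calc (CategoryTheory.Quotient.functor (homRel R)).map (ObjectProperty.homMk (s ≫ α) : P ⟶ E) ≫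
        (CategoryTheory.Quotient.functor (homRel R)).map (ObjectProperty.homMk (e) : E ⟶ P)
      = (CategoryTheory.Quotient.functor (homRel R)).map
          ((ObjectProperty.homMk (s ≫ α) : P ⟶ E) ≫ (ObjectProperty.homMk (e) : E ⟶ P)) := (Functor.map_comp _ _ _).symm
    _ = (CategoryTheory.Quotient.functor (homRel R)).map (𝟙 P) := by rw [h]
    _ = 𝟙 _ := CategoryTheory.Functor.map_id _ _

end Auxiliary

theorem statement_16 (hKS : KrullSchmidtCat C) (R : Set C)
    (hrig : Rigid R) (haddR : AddClosed R)
    [Abelian (CategoryTheory.Quotient (homRel R))] :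
    (∀ P : TwoTermSub R, P.obj ∈ R →
        Projective ((CategoryTheory.Quotient.functor (homRel R)).obj P)) ∧
      ∀ Z : CategoryTheory.Quotient (homRel R),
        ∃ (P : TwoTermSub R) (f : (CategoryTheory.Quotient.functor (homRel R)).obj P ⟶ Z),
          P.obj ∈ R ∧ Epi f := by
  classical
  constructor
  · intro P hP
    constructor
    intro E X f e he
    let W := pullback f e
    have hfst : Epi (pullback.fst f e) := inferInstance
    obtain ⟨fst₀, hfst₀⟩ := (CategoryTheory.Quotient.functor (homRel R)).map_surjective
      (X := W.as) (Y := P) (pullback.fst f e)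
    have hepi : Epi ((CategoryTheory.Quotient.functor (homRel R)).map
        (show W.as ⟶ P from fst₀)) := by rw [hfst₀]; exact hfst
    obtain ⟨σ, hσ⟩ := section_exists R hrig haddR hP
      fst₀.hom hepi
    refine ⟨σ ≫ pullback.snd f e, ?_⟩
    rw [Category.assoc, ← pullback.condition, ← Category.assoc]
    have : σ ≫ pullback.fst f e = 𝟙 _ := by rw [← hfst₀]; exact hσ
    rw [this, Category.id_comp]
  · intro Z
    obtain ⟨A, B, f, g, w, hA, hB, htri⟩ := Z.as.property
    exact ⟨⟨A, mem_star_of_mem_R R haddR hA⟩,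
      (CategoryTheory.Quotient.functor (homRel R)).map (show _ ⟶ Z.as from ObjectProperty.homMk f), hA,
      epi_of_triangle R hrig haddR (P := ⟨A, mem_star_of_mem_R R haddR hA⟩) (M := Z.as) hA f g w hB htri⟩


end RelCT
end

section
/- Assume in addition that R is 2-rigid, i.e. Hom(R, R[i]) = 0 for i = 1, 2. Then A = R*R[1] is closed under extensions; moreover Hom_C(R, A[1]) = 0, Hom_C(A, R[2]) = 0, and for all A, B ∈ A one has [R[1]](A, B[1]) = Hom_C(A, B[1]); consequently a subcategory X ⊆ A is R[1]-rigid if and only if it is rigid. -/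
open CategoryTheory CategoryTheory.Limits CategoryTheory.Pretriangulated

universe v u w

namespace RelCT

variable {C : Type u} [Category.{v} C] [Preadditive C] [HasZeroObject C]
  [HasShift C ℤ] [∀ n : ℤ, (CategoryTheory.shiftFunctor C n).Additive] [Pretriangulated C]

section AuxProofs

open CategoryTheory.Category CategoryTheory.Preadditive

set_option linter.unusedSectionVars false
set_option maxHeartbeats 1000000

lemma aux_exists_bip (X Y : C) :
    ∃ (Z : C) (pX : Z ⟶ X) (pY : Z ⟶ Y) (iX : X ⟶ Z) (iY : Y ⟶ Z),
      iX ≫ pX = 𝟙 X ∧ iY ≫ pY = 𝟙 Y ∧ pX ≫ iX + pY ≫ iY = 𝟙 Z := by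
  obtain ⟨Z, a, b, hT⟩ := Pretriangulated.distinguished_cocone_triangle (0 : Y⟦(-1:ℤ)⟧ ⟶ X)
  have hT' : (Triangle.mk (0 : Y⟦(-1:ℤ)⟧ ⟶ X) a b).rotate ∈ distTriang C := rot_of_distTriang _ hT
  have hmor3 : (Triangle.mk (0 : Y⟦(-1:ℤ)⟧ ⟶ X) a b).rotate.mor₃ = 0 := by
    show -(shiftFunctor C (1:ℤ)).map (0 : Y⟦(-1:ℤ)⟧ ⟶ X) = 0
    rw [Functor.map_zero, neg_zero]
  obtain ⟨ρ, hρ⟩ : ∃ ρ : Z ⟶ X, 𝟙 X = a ≫ ρ := Triangle.yoneda_exact₂ _ hT (𝟙 X) (by exact comp_id _)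
  have hη : a ≫ (𝟙 Z - ρ ≫ a) = 0 := by
    rw [comp_sub, comp_id, ← assoc, ← hρ, id_comp, sub_self]
  obtain ⟨τ, hτ⟩ : ∃ τ : (Y⟦(-1:ℤ)⟧ : C)⟦(1:ℤ)⟧ ⟶ Z, 𝟙 Z - ρ ≫ a = b ≫ τ :=
    Triangle.yoneda_exact₂ _ hT' (𝟙 Z - ρ ≫ a) hη
  have hab : a ≫ b = 0 := comp_distTriang_mor_zero₂₃ _ hT
  have hτb : τ ≫ b = 𝟙 ((Y⟦(-1:ℤ)⟧ : C)⟦(1:ℤ)⟧) := by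
    have hz : b ≫ (τ ≫ b - 𝟙 _) = 0 := by
      rw [comp_sub, comp_id, ← assoc, ← hτ, sub_comp, id_comp, assoc, hab, comp_zero,
        sub_zero, sub_self]
    obtain ⟨g, hg⟩ : ∃ g, τ ≫ b - 𝟙 _ = (Triangle.mk (0 : Y⟦(-1:ℤ)⟧ ⟶ X) a b).rotate.mor₃ ≫ g :=
      Triangle.yoneda_exact₃ _ hT' (τ ≫ b - 𝟙 _) hz
    rw [hmor3, zero_comp] at hg
    exact sub_eq_zero.mp hg
  have e : ((Y⟦(-1:ℤ)⟧ : C)⟦(1:ℤ)⟧ : C) ≅ Y :=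
    (shiftFunctorCompIsoId C (-1:ℤ) (1:ℤ) (by norm_num)).app Y
  refine ⟨Z, ρ, b ≫ e.hom, a, e.inv ≫ τ, hρ.symm, ?_, ?_⟩
  · rw [assoc, ← assoc τ, hτb, id_comp, Iso.inv_hom_id]
  · rw [assoc, ← assoc e.hom, Iso.hom_inv_id, id_comp, ← hτ]
    abel

lemma aux_cross {X Y Z : C} {pX : Z ⟶ X} {pY : Z ⟶ Y} {iX : X ⟶ Z} {iY : Y ⟶ Z}
    (hXX : iX ≫ pX = 𝟙 X) (hYY : iY ≫ pY = 𝟙 Y) (htot : pX ≫ iX + pY ≫ iY = 𝟙 Z) :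
    iX ≫ pY = 0 ∧ iY ≫ pX = 0 := by
  constructor
  · have h := congrArg (fun t => iX ≫ t ≫ pY) htot
    simp only [add_comp, comp_add, assoc, id_comp, comp_id] at h
    rw [reassoc_of% hXX, hYY, comp_id] at h
    exact add_eq_right.mp h
  · have h := congrArg (fun t => iY ≫ t ≫ pX) htot
    simp only [add_comp, comp_add, assoc, id_comp, comp_id] at h
    rw [reassoc_of% hYY, hXX, comp_id] at h
    exact add_eq_left.mp h

section Vanishing

variable {R : Set C}
variable (h1 : ∀ ⦃A B : C⦄, A ∈ R → B ∈ R → ∀ f : A ⟶ B⟦(1:ℤ)⟧, f = 0)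
variable (h2 : ∀ ⦃A B : C⦄, A ∈ R → B ∈ R → ∀ f : A ⟶ B⟦(2:ℤ)⟧, f = 0)

section
include h2

lemma aux_h11 {X Y : C} (hX : X ∈ R) (hY : Y ∈ R) (f : X ⟶ (Y⟦(1:ℤ)⟧ : C)⟦(1:ℤ)⟧) : f = 0 := by
  have e : ((Y⟦(2:ℤ)⟧ : C) ≅ (Y⟦(1:ℤ)⟧ : C)⟦(1:ℤ)⟧) :=
    (shiftFunctorAdd' C 1 1 2 (by norm_num)).app Y
  have h : f ≫ e.inv = 0 := h2 hX hY _
  calc f = (f ≫ e.inv) ≫ e.hom := by simp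
  _ = 0 := by rw [h, zero_comp]

end

section
include h1

lemma aux_h13 {X Y : C} (hX : X ∈ R) (hY : Y ∈ R)
    (f : (X⟦(1:ℤ)⟧ : C) ⟶ (Y⟦(1:ℤ)⟧ : C)⟦(1:ℤ)⟧) : f = 0 := by
  obtain ⟨g, hg⟩ := (shiftFunctor C (1:ℤ)).map_surjective f
  rw [← hg, h1 hX hY g, Functor.map_zero]

lemma aux_h12 {X Y : C} (hX : X ∈ R) (hY : Y ∈ R) (f : (X⟦(1:ℤ)⟧ : C) ⟶ Y⟦(2:ℤ)⟧) : f = 0 := by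
  have e : ((Y⟦(2:ℤ)⟧ : C) ≅ (Y⟦(1:ℤ)⟧ : C)⟦(1:ℤ)⟧) :=
    (shiftFunctorAdd' C 1 1 2 (by norm_num)).app Y
  have h : f ≫ e.hom = 0 := aux_h13 h1 hX hY _
  calc f = (f ≫ e.hom) ≫ e.inv := by simp
  _ = 0 := by rw [h, zero_comp]

lemma aux_RS {X B : C} (hX : X ∈ R) (hB : B ∈ shiftSet R 1) (f : X ⟶ B) : f = 0 := by
  obtain ⟨Y, hY, ⟨e⟩⟩ := hB
  have h : f ≫ e.hom = 0 := h1 hX hY _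
  calc f = (f ≫ e.hom) ≫ e.inv := by simp
  _ = 0 := by rw [h, zero_comp]

lemma aux_SS1 {B B' : C} (hB : B ∈ shiftSet R 1) (hB' : B' ∈ shiftSet R 1)
    (f : B ⟶ (B'⟦(1:ℤ)⟧ : C)) : f = 0 := by
  obtain ⟨Y, hY, ⟨e⟩⟩ := hB
  obtain ⟨Y', hY', ⟨e'⟩⟩ := hB'
  have h : e.inv ≫ f ≫ (shiftFunctor C (1:ℤ)).map e'.hom = 0 := aux_h13 h1 hY hY' _
  calc f = e.hom ≫ (e.inv ≫ f ≫ (shiftFunctor C (1:ℤ)).map e'.hom) ≫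
      (shiftFunctor C (1:ℤ)).map e'.inv := by
        rw [assoc, assoc, ← Functor.map_comp, Iso.hom_inv_id]
        simp
  _ = 0 := by rw [h, zero_comp, comp_zero]

lemma aux_SR2 {B Y : C} (hB : B ∈ shiftSet R 1) (hY : Y ∈ R) (f : B ⟶ (Y⟦(2:ℤ)⟧ : C)) :
    f = 0 := by
  obtain ⟨Y', hY', ⟨e⟩⟩ := hB
  have h : e.inv ≫ f = 0 := aux_h12 h1 hY' hY _
  calc f = e.hom ≫ e.inv ≫ f := by rw [← assoc, e.hom_inv_id, id_comp]
  _ = 0 := by rw [h, comp_zero]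

end

section
include h1 h2

lemma aux_RS1 {X B : C} (hX : X ∈ R) (hB : B ∈ shiftSet R 1) (f : X ⟶ (B⟦(1:ℤ)⟧ : C)) :
    f = 0 := by
  obtain ⟨Y, hY, ⟨e⟩⟩ := hB
  have h : f ≫ (shiftFunctor C (1:ℤ)).map e.hom = 0 := aux_h11 h2 hX hY _
  calc f = (f ≫ (shiftFunctor C (1:ℤ)).map e.hom) ≫ (shiftFunctor C (1:ℤ)).map e.inv := by
        rw [assoc, ← Functor.map_comp, Iso.hom_inv_id]
        simp
  _ = 0 := by rw [h, zero_comp]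

lemma aux_L2 {X B : C} (hX : X ∈ R) (hB : B ∈ star R (shiftSet R 1))
    (f : X ⟶ (B⟦(1:ℤ)⟧ : C)) : f = 0 := by
  obtain ⟨A₀, B₀, f₀, g₀, h₀, hA₀, hB₀, hT⟩ := hB
  have hT2 : (Triangle.mk f₀ g₀ h₀).rotate.rotate ∈ distTriang C :=
    rot_of_distTriang _ (rot_of_distTriang _ hT)
  have hf3 : f ≫ (Triangle.mk f₀ g₀ h₀).rotate.rotate.mor₃ = 0 := by
    have hz : f ≫ (shiftFunctor C (1:ℤ)).map g₀ = 0 := aux_RS1 h1 h2 hX hB₀ _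
    show f ≫ (-(shiftFunctor C (1:ℤ)).map g₀) = 0
    rw [comp_neg, hz, neg_zero]
  obtain ⟨g, hg⟩ : ∃ g : X ⟶ (A₀⟦(1:ℤ)⟧ : C), f = g ≫ (Triangle.mk f₀ g₀ h₀).rotate.rotate.mor₂ :=
    Triangle.coyoneda_exact₃ _ hT2 f hf3
  rw [hg, show g = 0 from h1 hX hA₀ g]
  exact zero_comp

lemma aux_L3 {A Y : C} (hA : A ∈ star R (shiftSet R 1)) (hY : Y ∈ R)
    (f : A ⟶ (Y⟦(2:ℤ)⟧ : C)) : f = 0 := by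
  obtain ⟨A₀, B₀, f₀, g₀, h₀, hA₀, hB₀, hT⟩ := hA
  have h0 : f₀ ≫ f = 0 := h2 hA₀ hY _
  obtain ⟨t, ht⟩ : ∃ t : B₀ ⟶ (Y⟦(2:ℤ)⟧ : C), f = g₀ ≫ t :=
    Triangle.yoneda_exact₂ _ hT f h0
  rw [ht, aux_SR2 h1 hB₀ hY t, comp_zero]

lemma aux_L4 {A B : C} (hA : A ∈ star R (shiftSet R 1)) (hB : B ∈ star R (shiftSet R 1))
    (f : A ⟶ (B⟦(1:ℤ)⟧ : C)) : Factors (shiftSet R 1) f := by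
  obtain ⟨A₀, B₀, f₀, g₀, h₀, hA₀, hB₀, hT⟩ := hA
  have h0 : f₀ ≫ f = 0 := aux_L2 h1 h2 hA₀ hB _
  obtain ⟨t, ht⟩ : ∃ t : B₀ ⟶ (B⟦(1:ℤ)⟧ : C), f = g₀ ≫ t :=
    Triangle.yoneda_exact₂ _ hT f h0
  exact ⟨B₀, g₀, t, hB₀, ht⟩

lemma aux_ext (haddR : AddClosed R) (A₁ A₂ E : C)
    (hA₁ : A₁ ∈ star R (shiftSet R 1)) (hA₂ : A₂ ∈ star R (shiftSet R 1))
    (u : A₁ ⟶ E) (v : E ⟶ A₂) (h : A₂ ⟶ A₁⟦(1:ℤ)⟧)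
    (hT3 : Triangle.mk u v h ∈ distTriang C) : E ∈ star R (shiftSet R 1) := by
  obtain ⟨Ra, Sa, fa, ga, wa, hRa, hSa, hT1⟩ := id hA₁
  obtain ⟨Rb, Sb, fb, gb, wb, hRb, hSb, hT2⟩ := id hA₂
  obtain ⟨P, pX, pY, iX, iY, hXX, hYY, htot⟩ := aux_exists_bip Ra Rb
  obtain ⟨hcXY, hcYX⟩ := aux_cross hXX hYY htot
  have hP : P ∈ R := haddR P (addClosure.sum (addClosure.of hRa) (addClosure.of hRb)
    ⟨pX, pY, iX, iY, hXX, hYY, htot⟩)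
  have hfaga : fa ≫ ga = 0 := comp_distTriang_mor_zero₁₂ _ hT1
  have hfbgb : fb ≫ gb = 0 := comp_distTriang_mor_zero₁₂ _ hT2
  have huv : u ≫ v = 0 := comp_distTriang_mor_zero₁₂ _ hT3
  have hfbh : fb ≫ h = 0 := aux_L2 h1 h2 hRb hA₁ _
  obtain ⟨eb, heb⟩ : ∃ eb : Rb ⟶ E, fb = eb ≫ v := Triangle.coyoneda_exact₃ _ hT3 fb hfbh
  set q : P ⟶ E := pX ≫ fa ≫ u + pY ≫ eb with hq
  obtain ⟨W, π, δ, hT4⟩ := Pretriangulated.distinguished_cocone_triangle q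
  have hqπ : q ≫ π = 0 := comp_distTriang_mor_zero₁₂ _ hT4
  have hπδ : π ≫ δ = 0 := comp_distTriang_mor_zero₂₃ _ hT4
  have hiXq : iX ≫ q = fa ≫ u := by
    rw [hq, comp_add, reassoc_of% hXX, reassoc_of% hcXY]
    simp
  have hiYq : iY ≫ q = eb := by
    rw [hq, comp_add, reassoc_of% hYY, reassoc_of% hcYX]
    simp
  obtain ⟨φ, hφ⟩ : ∃ φ : Sa ⟶ W, ga ≫ φ = u ≫ π := by
    obtain ⟨c, hc, -⟩ := Pretriangulated.complete_distinguished_triangle_morphism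
      (Triangle.mk fa ga wa) (Triangle.mk q π δ) hT1 hT4 iX u hiXq.symm
    exact ⟨c, hc⟩
  have hhga : h ≫ (shiftFunctor C (1:ℤ)).map ga = 0 := by
    have h5 : fb ≫ (h ≫ (shiftFunctor C (1:ℤ)).map ga) = 0 := by
      rw [← assoc, hfbh, zero_comp]
    obtain ⟨t, ht⟩ : ∃ t : Sb ⟶ (Sa⟦(1:ℤ)⟧ : C), h ≫ (shiftFunctor C (1:ℤ)).map ga = gb ≫ t :=
      Triangle.yoneda_exact₂ _ hT2 _ h5
    rw [ht, aux_SS1 h1 hSb hSa t, comp_zero]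
  have hT3rr := rot_of_distTriang _ (rot_of_distTriang _ hT3)
  have hcond : (Triangle.mk u v h).rotate.rotate.mor₁ ≫ (shiftFunctor C (1:ℤ)).map ga = 0 := hhga
  obtain ⟨g', hg'⟩ : ∃ g' : (E⟦(1:ℤ)⟧ : C) ⟶ (Sa⟦(1:ℤ)⟧ : C),
      (shiftFunctor C (1:ℤ)).map ga = (-(shiftFunctor C (1:ℤ)).map u) ≫ g' :=
    Triangle.yoneda_exact₂ _ hT3rr _ hcond
  obtain ⟨ρ', hρ'⟩ := (shiftFunctor C (1:ℤ)).map_surjective g'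
  obtain ⟨ρa, huρa⟩ : ∃ ρa : E ⟶ Sa, u ≫ ρa = ga := by
    refine ⟨-ρ', ?_⟩
    apply (shiftFunctor C (1:ℤ)).map_injective
    rw [Functor.map_comp, hg', ← hρ', neg_comp, Functor.map_neg, comp_neg]
  have homRW : ∀ (R₀ : C), R₀ ∈ R → ∀ m : R₀ ⟶ W, m = 0 := by
    intro R₀ hR₀ m
    have hmδ : m ≫ δ = 0 := by
      have c1 : (m ≫ δ) ≫ (shiftFunctor C (1:ℤ)).map pX = 0 := h1 hR₀ hRa _
      have c2 : (m ≫ δ) ≫ (shiftFunctor C (1:ℤ)).map pY = 0 := h1 hR₀ hRb _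
      have hid : (𝟙 ((P⟦(1:ℤ)⟧ : C)) : (P⟦(1:ℤ)⟧ : C) ⟶ P⟦(1:ℤ)⟧) =
          (shiftFunctor C (1:ℤ)).map pX ≫ (shiftFunctor C (1:ℤ)).map iX +
          (shiftFunctor C (1:ℤ)).map pY ≫ (shiftFunctor C (1:ℤ)).map iY := by
        rw [← Functor.map_comp, ← Functor.map_comp, ← Functor.map_add, htot,
          CategoryTheory.Functor.map_id]
      calc m ≫ δ = (m ≫ δ) ≫ 𝟙 _ := (comp_id _).symm
      _ = 0 := by
        rw [hid, comp_add, ← assoc, ← assoc, c1, c2, zero_comp, zero_comp, add_zero]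
    obtain ⟨m', hm'⟩ : ∃ m' : R₀ ⟶ E, m = m' ≫ π := Triangle.coyoneda_exact₃ _ hT4 m hmδ
    have h6 : (m' ≫ v) ≫ gb = 0 := by
      rw [assoc]
      exact aux_RS h1 hR₀ hSb _
    obtain ⟨n, hn⟩ : ∃ n : R₀ ⟶ Rb, m' ≫ v = n ≫ fb := Triangle.coyoneda_exact₂ _ hT2 _ h6
    have h7 : (m' - n ≫ eb) ≫ v = 0 := by
      rw [sub_comp, assoc, ← heb, hn, sub_self]
    obtain ⟨l, hl⟩ : ∃ l : R₀ ⟶ A₁, m' - n ≫ eb = l ≫ u := Triangle.coyoneda_exact₂ _ hT3 _ h7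
    have h8 : l ≫ ga = 0 := aux_RS h1 hR₀ hSa _
    have h10 : eb ≫ π = 0 := by
      rw [← hiYq, assoc, hqπ, comp_zero]
    calc m = m' ≫ π := hm'
    _ = ((m' - n ≫ eb) + n ≫ eb) ≫ π := by rw [sub_add_cancel]
    _ = l ≫ u ≫ π + n ≫ eb ≫ π := by rw [add_comp, hl, assoc, assoc]
    _ = 0 := by rw [h10, ← hφ, ← assoc, h8, zero_comp, comp_zero, add_zero]
  have hqρa : q ≫ ρa = 0 := by
    have hebρa : eb ≫ ρa = 0 := aux_RS h1 hRb hSa _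
    rw [hq, add_comp, assoc, assoc, huρa, hfaga, assoc, hebρa, comp_zero, comp_zero, add_zero]
  obtain ⟨θa, hθa⟩ : ∃ θa : W ⟶ Sa, ρa = π ≫ θa := Triangle.yoneda_exact₂ _ hT4 ρa hqρa
  have hqvgb : q ≫ (v ≫ gb) = 0 := by
    rw [hq, add_comp, assoc, assoc, ← assoc u, huv, zero_comp, comp_zero, assoc, ← assoc eb,
      ← heb, hfbgb, comp_zero, zero_add, comp_zero]
  obtain ⟨θb, hθb⟩ : ∃ θb : W ⟶ Sb, v ≫ gb = π ≫ θb := Triangle.yoneda_exact₂ _ hT4 _ hqvgb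
  have hDu : u ≫ (π - ρa ≫ φ) = 0 := by
    rw [comp_sub, ← assoc, huρa, hφ, sub_self]
  obtain ⟨D', hD'⟩ : ∃ D' : A₂ ⟶ W, π - ρa ≫ φ = v ≫ D' := Triangle.yoneda_exact₂ _ hT3 _ hDu
  have hfbD' : fb ≫ D' = 0 := homRW Rb hRb _
  obtain ⟨rB, hrB⟩ : ∃ rB : Sb ⟶ W, D' = gb ≫ rB := Triangle.yoneda_exact₂ _ hT2 D' hfbD'
  have hπid : π ≫ (𝟙 W - (θa ≫ φ + θb ≫ rB)) = 0 := by
    have e1 : π ≫ θa ≫ φ = ρa ≫ φ := by rw [← assoc, ← hθa]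
    have e2 : π ≫ θb ≫ rB = π - ρa ≫ φ := by
      rw [← assoc, ← hθb, assoc, ← hrB, ← hD']
    rw [comp_sub, comp_add, e1, e2, comp_id]
    abel
  obtain ⟨r₂, hr₂⟩ : ∃ r₂ : (P⟦(1:ℤ)⟧ : C) ⟶ W, 𝟙 W - (θa ≫ φ + θb ≫ rB) = δ ≫ r₂ :=
    Triangle.yoneda_exact₃ _ hT4 _ hπid
  have hid : 𝟙 W = θa ≫ φ + θb ≫ rB + δ ≫ r₂ := by
    rw [← hr₂]
    abel
  obtain ⟨Z₁, p₁, p₂, i₁, i₂, hb1, hb2, hb3⟩ := aux_exists_bip Sb ((P⟦(1:ℤ)⟧ : C))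
  obtain ⟨hd1, hd2⟩ := aux_cross hb1 hb2 hb3
  obtain ⟨Z, P₁, P₂, I₁, I₂, hc1, hc2, hc3⟩ := aux_exists_bip Sa Z₁
  obtain ⟨he1, he2⟩ := aux_cross hc1 hc2 hc3
  set s : W ⟶ Z := θa ≫ I₁ + (θb ≫ i₁ + δ ≫ i₂) ≫ I₂ with hs
  set r : Z ⟶ W := P₁ ≫ φ + P₂ ≫ (p₁ ≫ rB + p₂ ≫ r₂) with hr
  have hsr : s ≫ r = 𝟙 W := by
    rw [hs, hr]
    simp only [add_comp, comp_add, assoc, reassoc_of% hc1, reassoc_of% hc2, reassoc_of% he1,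
      reassoc_of% he2, reassoc_of% hb1, reassoc_of% hb2, reassoc_of% hd1, reassoc_of% hd2,
      zero_comp, comp_zero, add_zero, zero_add]
    rw [hid]
    abel
  have hsr' : (shiftFunctor C (-1:ℤ)).map s ≫ (shiftFunctor C (-1:ℤ)).map r = 𝟙 _ := by
    rw [← Functor.map_comp, hsr, CategoryTheory.Functor.map_id]
  have hWm : ((W⟦(-1:ℤ)⟧ : C)) ∈ R := by
    apply haddR
    refine addClosure.smd ?_ ⟨_, _, hsr'⟩
    have hshiftsum : ∀ (X Y Z' : C) (pX' : Z' ⟶ X) (pY' : Z' ⟶ Y) (iX' : X ⟶ Z') (iY' : Y ⟶ Z'),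
        iX' ≫ pX' = 𝟙 X → iY' ≫ pY' = 𝟙 Y → pX' ≫ iX' + pY' ≫ iY' = 𝟙 Z' →
        addClosure R ((X⟦(-1:ℤ)⟧ : C)) → addClosure R ((Y⟦(-1:ℤ)⟧ : C)) →
        addClosure R ((Z'⟦(-1:ℤ)⟧ : C)) := by
      intro X Y Z' pX' pY' iX' iY' e1 e2 e3 m1 m2
      refine addClosure.sum m1 m2 ⟨(shiftFunctor C (-1:ℤ)).map pX',
        (shiftFunctor C (-1:ℤ)).map pY',
        (shiftFunctor C (-1:ℤ)).map iX', (shiftFunctor C (-1:ℤ)).map iY', ?_, ?_, ?_⟩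
      · rw [← Functor.map_comp, e1, CategoryTheory.Functor.map_id]
      · rw [← Functor.map_comp, e2, CategoryTheory.Functor.map_id]
      · rw [← Functor.map_comp, ← Functor.map_comp, ← Functor.map_add, e3,
          CategoryTheory.Functor.map_id]
    have hSam : addClosure R ((Sa⟦(-1:ℤ)⟧ : C)) := by
      obtain ⟨Ya, hYa, ⟨ea⟩⟩ := hSa
      have e' : ((Sa⟦(-1:ℤ)⟧ : C) ≅ Ya) :=
        ((shiftFunctor C (-1:ℤ)).mapIso ea).trans
          ((shiftFunctorCompIsoId C (1:ℤ) (-1:ℤ) (by norm_num)).app Ya)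
      exact addClosure.smd (addClosure.of hYa) ⟨e'.hom, e'.inv, e'.hom_inv_id⟩
    have hSbm : addClosure R ((Sb⟦(-1:ℤ)⟧ : C)) := by
      obtain ⟨Yb, hYb, ⟨ebb⟩⟩ := hSb
      have e' : ((Sb⟦(-1:ℤ)⟧ : C) ≅ Yb) :=
        ((shiftFunctor C (-1:ℤ)).mapIso ebb).trans
          ((shiftFunctorCompIsoId C (1:ℤ) (-1:ℤ) (by norm_num)).app Yb)
      exact addClosure.smd (addClosure.of hYb) ⟨e'.hom, e'.inv, e'.hom_inv_id⟩
    have hPm : addClosure R (((P⟦(1:ℤ)⟧ : C)⟦(-1:ℤ)⟧ : C)) := by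
      have e' : (((P⟦(1:ℤ)⟧ : C)⟦(-1:ℤ)⟧ : C) ≅ P) :=
        (shiftFunctorCompIsoId C (1:ℤ) (-1:ℤ) (by norm_num)).app P
      exact addClosure.smd (addClosure.of hP) ⟨e'.hom, e'.inv, e'.hom_inv_id⟩
    have hZ₁m : addClosure R ((Z₁⟦(-1:ℤ)⟧ : C)) :=
      hshiftsum _ _ _ p₁ p₂ i₁ i₂ hb1 hb2 hb3 hSbm hPm
    exact hshiftsum _ _ _ P₁ P₂ I₁ I₂ hc1 hc2 hc3 hSam hZ₁m
  have hWmem : W ∈ shiftSet R 1 :=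
    ⟨(W⟦(-1:ℤ)⟧ : C), hWm, ⟨((shiftFunctorCompIsoId C (-1:ℤ) (1:ℤ) (by norm_num)).app W).symm⟩⟩
  exact ⟨P, W, q, π, δ, hP, hWmem, hT4⟩

end

end Vanishing

end AuxProofs

theorem statement_18 (hKS : KrullSchmidtCat C) (R : Set C) (haddR : AddClosed R)
    (h1 : ∀ ⦃A B : C⦄, A ∈ R → B ∈ R → ∀ f : A ⟶ B⟦(1:ℤ)⟧, f = 0)
    (h2 : ∀ ⦃A B : C⦄, A ∈ R → B ∈ R → ∀ f : A ⟶ B⟦(2:ℤ)⟧, f = 0) :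
    (∀ (A₁ A₂ E : C), A₁ ∈ star R (shiftSet R 1) → A₂ ∈ star R (shiftSet R 1) →
        ∀ (f : A₁ ⟶ E) (g : E ⟶ A₂) (h : A₂ ⟶ A₁⟦(1:ℤ)⟧),
          (Triangle.mk f g h ∈ distTriang C) → E ∈ star R (shiftSet R 1)) ∧
    (∀ R₀ ∈ R, ∀ B ∈ star R (shiftSet R 1), ∀ f : R₀ ⟶ B⟦(1:ℤ)⟧, f = 0) ∧
    (∀ A ∈ star R (shiftSet R 1), ∀ R₀ ∈ R, ∀ f : A ⟶ R₀⟦(2:ℤ)⟧, f = 0) ∧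
    (∀ A B : C, A ∈ star R (shiftSet R 1) → B ∈ star R (shiftSet R 1) →
        ∀ f : A ⟶ B⟦(1:ℤ)⟧, Factors (shiftSet R 1) f) ∧
    (∀ X : Set C, X ⊆ star R (shiftSet R 1) → (RelRigid R X X ↔ Rigid X)) := by
  refine ⟨?_, ?_, ?_, ?_, ?_⟩
  · exact fun A₁ A₂ E hA₁ hA₂ f g hh hT => aux_ext h1 h2 haddR A₁ A₂ E hA₁ hA₂ f g hh hT
  · exact fun R₀ hR₀ B hB f => aux_L2 h1 h2 hR₀ hB f
  · exact fun A hA R₀ hR₀ f => aux_L3 h1 h2 hA hR₀ f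
  · exact fun A B hA hB f => aux_L4 h1 h2 hA hB f
  · intro X hX
    constructor
    · intro hrel A B hA hB f
      exact hrel hA hB f (aux_L4 h1 h2 (hX hA) (hX hB) f)
    · intro hrig A B hA hB f _
      exact hrig hA hB f

end RelCT
end
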